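/- arXiv:1604.01153 — 3 statements merged into one kernel-verified Lean document; each statement's English description precedes it below -/
import Mathlib

section
/- Let K be a number field, let E be the elliptic curve over K given by a short Weierstrass equation y² = x³ + Ax + B, and let d ∈ K be a nonzero element that is not a square in K. Set L = K(√d), and let E^d denote the quadratic twist of E by d, given by y² = x³ + Ad²x + Bd³. If H is a subgroup of the torsion subgroup of E^d(K) of odd order, then there exists a subgroup J of the torsion subgroup of E(L) that is invariant under the action of Gal(K̄/K) and satisfies J ≅ H ⊕ E(K)_tor. -/
open WeierstrassCurve WeierstrassCurve.Affine
open WeierstrassCurve.Affine.Point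

namespace TwistAux
variable {F : Type*} [Field F] [DecidableEq F]
structure TwistData (V₁ V₂ : WeierstrassCurve F) (s : F) : Prop where
  h1 : V₁.a₁ = 0
  h2 : V₁.a₂ = 0
  h3 : V₁.a₃ = 0
  g1 : V₂.a₁ = 0
  g2 : V₂.a₂ = 0
  g3 : V₂.a₃ = 0
  g4 : V₂.a₄ = V₁.a₄ * s ^ 4
  g6 : V₂.a₆ = V₁.a₆ * s ^ 6
  hs : s ≠ 0
variable {V₁ V₂ : WeierstrassCurve F} {s : F}

lemma tw_equation (T : TwistData V₁ V₂ s) (x y : F) :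
    V₂.toAffine.Equation x y ↔ V₁.toAffine.Equation (x / s ^ 2) (y / s ^ 3) := by
  have hs := T.hs
  rw [equation_iff, equation_iff]
  rw [show V₂.toAffine.a₁ = 0 from T.g1, show V₂.toAffine.a₂ = 0 from T.g2,
    show V₂.toAffine.a₃ = 0 from T.g3, show V₂.toAffine.a₄ = _ from T.g4,
    show V₂.toAffine.a₆ = _ from T.g6, show V₁.toAffine.a₁ = 0 from T.h1,
    show V₁.toAffine.a₂ = 0 from T.h2, show V₁.toAffine.a₃ = 0 from T.h3]
  constructor <;> intro h
  · field_simp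
    linear_combination h
  · field_simp at h
    have h8 : s ^ 8 * y ^ 2 = s ^ 8 * (x ^ 3 + V₁.toAffine.a₄ * s ^ 4 * x +
        V₁.toAffine.a₆ * s ^ 6) := by linear_combination s ^ 8 * h
    have h9 := mul_left_cancel₀ (pow_ne_zero 8 hs) h8
    linear_combination h9

lemma tw_nonsingular (T : TwistData V₁ V₂ s) (x y : F) :
    V₂.toAffine.Nonsingular x y ↔ V₁.toAffine.Nonsingular (x / s ^ 2) (y / s ^ 3) := by
  have hs := T.hs
  rw [nonsingular_iff', nonsingular_iff', ← tw_equation T]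
  rw [show V₂.toAffine.a₁ = 0 from T.g1, show V₂.toAffine.a₂ = 0 from T.g2,
    show V₂.toAffine.a₃ = 0 from T.g3, show V₂.toAffine.a₄ = _ from T.g4,
    show V₁.toAffine.a₁ = 0 from T.h1, show V₁.toAffine.a₂ = 0 from T.h2,
    show V₁.toAffine.a₃ = 0 from T.h3]
  refine and_congr Iff.rfl (or_congr ?_ ?_)
  · have : (0 : F) * (y / s ^ 3) - (3 * (x / s ^ 2) ^ 2 + 2 * 0 * (x / s ^ 2) + V₁.a₄) =
        (0 * y - (3 * x ^ 2 + 2 * 0 * x + V₁.a₄ * s ^ 4)) / s ^ 4 := by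
      field_simp; ring
    rw [this, div_ne_zero_iff]
    simp [pow_ne_zero _ hs]
  · have : 2 * (y / s ^ 3) + 0 * (x / s ^ 2) + 0 = (2 * y + 0 * x + 0) / s ^ 3 := by
      field_simp
      ring
    rw [this, div_ne_zero_iff]
    simp [pow_ne_zero _ hs]

lemma tw_negY (T : TwistData V₁ V₂ s) (x y : F) :
    V₁.toAffine.negY (x / s ^ 2) (y / s ^ 3) = V₂.toAffine.negY x y / s ^ 3 := by
  rw [negY, negY, show V₁.toAffine.a₁ = 0 from T.h1, show V₁.toAffine.a₃ = 0 from T.h3,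
    show V₂.toAffine.a₁ = 0 from T.g1, show V₂.toAffine.a₃ = 0 from T.g3]
  have hs := T.hs
  field_simp
  ring

lemma tw_addX (T : TwistData V₁ V₂ s) (x₁ x₂ l : F) :
    V₁.toAffine.addX (x₁ / s ^ 2) (x₂ / s ^ 2) (l / s) = V₂.toAffine.addX x₁ x₂ l / s ^ 2 := by
  rw [addX, addX, show V₁.toAffine.a₁ = 0 from T.h1, show V₁.toAffine.a₂ = 0 from T.h2,
    show V₂.toAffine.a₁ = 0 from T.g1, show V₂.toAffine.a₂ = 0 from T.g2]
  have hs := T.hs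
  field_simp
  ring

lemma tw_negAddY (T : TwistData V₁ V₂ s) (x₁ x₂ y₁ l : F) :
    V₁.toAffine.negAddY (x₁ / s ^ 2) (x₂ / s ^ 2) (y₁ / s ^ 3) (l / s) =
      V₂.toAffine.negAddY x₁ x₂ y₁ l / s ^ 3 := by
  rw [negAddY, negAddY, tw_addX T]
  have hs := T.hs
  field_simp

lemma tw_addY (T : TwistData V₁ V₂ s) (x₁ x₂ y₁ l : F) :
    V₁.toAffine.addY (x₁ / s ^ 2) (x₂ / s ^ 2) (y₁ / s ^ 3) (l / s) =
      V₂.toAffine.addY x₁ x₂ y₁ l / s ^ 3 := by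
  rw [addY, addY, tw_addX T, tw_negAddY T, tw_negY T]

lemma tw_slope (T : TwistData V₁ V₂ s) (x₁ x₂ y₁ y₂ : F) :
    V₁.toAffine.slope (x₁ / s ^ 2) (x₂ / s ^ 2) (y₁ / s ^ 3) (y₂ / s ^ 3) =
      V₂.toAffine.slope x₁ x₂ y₁ y₂ / s := by
  have hs := T.hs
  have hdx : x₁ / s ^ 2 = x₂ / s ^ 2 ↔ x₁ = x₂ := div_left_inj' (pow_ne_zero 2 hs)
  have hdy : ∀ a b : F, a / s ^ 3 = b / s ^ 3 ↔ a = b := fun a b =>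
    div_left_inj' (pow_ne_zero 3 hs)
  by_cases hx : x₁ = x₂
  · by_cases hy : y₁ = V₂.toAffine.negY x₂ y₂
    · rw [slope_of_Y_eq (hdx.mpr hx) (by rw [tw_negY T, hdy]; exact hy),
        slope_of_Y_eq hx hy, zero_div]
    · rw [slope_of_Y_ne (hdx.mpr hx)
          (fun e => hy ((hdy _ _).mp (by rwa [tw_negY T] at e))),
        slope_of_Y_ne hx hy]
      rw [tw_negY T]
      simp only [negY]
      rw [show V₁.toAffine.a₁ = 0 from T.h1, show V₁.toAffine.a₂ = 0 from T.h2,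
        show V₂.toAffine.a₁ = 0 from T.g1, show V₂.toAffine.a₂ = 0 from T.g2,
        show V₂.toAffine.a₃ = 0 from T.g3, show V₁.toAffine.a₄ = _ from
          (by rw [T.g4]; field_simp : V₁.a₄ = V₂.a₄ / s ^ 4)]
      subst hx
      have key : ∀ A B : F, (A / s ^ 4) / (B / s ^ 3) = (A / B) / s := by
        intro A B
        rcases eq_or_ne B 0 with hB | hB
        · simp [hB]
        · field_simp
      rw [div_sub_div_same, show (3 * (x₁ / s ^ 2) ^ 2 + 2 * 0 * (x₁ / s ^ 2) + V₂.a₄ / s ^ 4 -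
            0 * (y₁ / s ^ 3)) = (3 * x₁ ^ 2 + 2 * 0 * x₁ + V₂.toAffine.a₄ - 0 * y₁) / s ^ 4 from by
          field_simp; ring, key]
  · rw [slope_of_X_ne (fun e => hx (hdx.mp e)), slope_of_X_ne hx]
    have hxx : x₁ - x₂ ≠ 0 := sub_ne_zero.mpr hx
    field_simp

/-- The twist map on points. -/
def twFun (T : TwistData V₁ V₂ s) : V₂.toAffine.Point → V₁.toAffine.Point
  | 0 => 0
  | .some _ _ h => .some _ _ ((tw_nonsingular T _ _).mp h)

/-- The twist group homomorphism on points. -/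
noncomputable def twHom (T : TwistData V₁ V₂ s) : V₂.toAffine.Point →+ V₁.toAffine.Point where
  toFun := twFun T
  map_zero' := rfl
  map_add' := by
    have hs := T.hs
    have hdx : ∀ a b : F, a / s ^ 2 = b / s ^ 2 ↔ a = b := fun a b =>
      div_left_inj' (pow_ne_zero 2 hs)
    have hdy : ∀ a b : F, a / s ^ 3 = b / s ^ 3 ↔ a = b := fun a b =>
      div_left_inj' (pow_ne_zero 3 hs)
    rintro (_ | @⟨x₁, y₁, _⟩) (_ | @⟨x₂, y₂, _⟩)
    any_goals rfl
    by_cases h : x₁ = x₂ ∧ y₁ = V₂.toAffine.negY x₂ y₂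
    · simp only [add_of_Y_eq h.1 h.2, twFun]
      rw [add_of_Y_eq ((hdx _ _).mpr h.1) (by rw [tw_negY T, hdy]; exact h.2)]
    · simp only [add_some h, twFun]
      rw [add_some (fun hxy => h ⟨(hdx _ _).mp hxy.1,
        (hdy _ _).mp (by have hy := hxy.2; rwa [tw_negY T] at hy)⟩)]
      simp only [some.injEq, tw_slope T, ← tw_addX T, ← tw_addY T]

lemma twHom_some (T : TwistData V₁ V₂ s) {x y : F} (h : V₂.toAffine.Nonsingular x y) :
    twHom T (.some _ _ h) = .some _ _ ((tw_nonsingular T _ _).mp h) := rfl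

lemma twHom_injective (T : TwistData V₁ V₂ s) : Function.Injective (twHom T) := by
  have hs := T.hs
  rintro (_ | _) (_ | _) h
  any_goals contradiction
  · rfl
  · simp only [twHom_some, some.injEq] at h
    simpa only [some.injEq] using ⟨(div_left_inj' (pow_ne_zero 2 hs)).mp h.1,
      (div_left_inj' (pow_ne_zero 3 hs)).mp h.2⟩

end TwistAux

open Classical in
/-- Let `K` be a number field, `E : y² = x³ + Ax + B` an elliptic curve over `K`, `d ∈ K` a
nonzero nonsquare, `L = K(√d)` (realized as an intermediate field of `K̄/K` of degree 2
containing a square root of `d`), and `E^d : y² = x³ + Ad²x + Bd³` the quadratic twist. If `H`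
is a subgroup of the torsion subgroup of `E^d(K)` of odd order, then there is a subgroup `J` of
the torsion subgroup of `E(L)`, invariant under `Gal(K̄/K)`, with `J ≅ H ⊕ E(K)_tor`. -/
theorem twist_subgroup_transfer {K : Type*} [Field K] [NumberField K] (A B d : K)
    (hd : d ≠ 0) (hd' : ¬ IsSquare d)
    (W : WeierstrassCurve K) (hW : W = ⟨0, 0, 0, A, B⟩) (hΔ : W.Δ ≠ 0)
    (Wd : WeierstrassCurve K) (hWd : Wd = ⟨0, 0, 0, A * d ^ 2, B * d ^ 3⟩)
    (L : IntermediateField K (AlgebraicClosure K))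
    (hL2 : Module.finrank K L = 2)
    (hLd : ∃ s : L, s ^ 2 = algebraMap K L d)
    (H : AddSubgroup (Affine.Point (Affine.baseChange Wd K)))
    (hHtor : H ≤ AddCommGroup.torsion (Affine.Point (Affine.baseChange Wd K)))
    (hHodd : Odd (Nat.card H)) :
    ∃ J : AddSubgroup (Affine.Point (Affine.baseChange W L)),
      J ≤ AddCommGroup.torsion (Affine.Point (Affine.baseChange W L)) ∧
      (∀ σ : AlgebraicClosure K ≃ₐ[K] AlgebraicClosure K,
        (J.map (Point.map (W' := W) L.val)).map (Point.map (W' := W) σ.toAlgHom) = J.map (Point.map (W' := W) L.val)) ∧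
      Nonempty (J ≃+ H × AddCommGroup.torsion (Affine.Point (Affine.baseChange W K))) := by
  obtain ⟨s, hs⟩ := hLd
  have hqinj : Function.Injective (algebraMap K ↥L) := (algebraMap K ↥L).injective
  have hs0 : s ≠ 0 := fun h =>
    hd (hqinj (by rw [← hs, h, _root_.map_zero]; norm_num))
  have hnsq : ∀ k : K, algebraMap K ↥L k ≠ s := by
    intro k hk
    exact hd' ⟨k, hqinj (by rw [map_mul, hk, ← pow_two, hs])⟩
  have T : TwistAux.TwistData (W.baseChange ↥L) (Wd.baseChange ↥L) s := by
    refine ⟨?_, ?_, ?_, ?_, ?_, ?_, ?_, ?_, hs0⟩ <;>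
      simp only [WeierstrassCurve.baseChange, WeierstrassCurve.map_a₁, WeierstrassCurve.map_a₂,
        WeierstrassCurve.map_a₃, WeierstrassCurve.map_a₄, WeierstrassCurve.map_a₆, hW, hWd,
        _root_.map_zero, map_mul, map_pow, ← hs] <;> ring
  let ψ : (Affine.Point (Affine.baseChange Wd K)) →+ (Affine.Point (Affine.baseChange W L)) := (TwistAux.twHom T).comp (Point.map (W' := Wd) (Algebra.ofId K ↥L))
  let ι : (Affine.Point (Affine.baseChange W K)) →+ (Affine.Point (Affine.baseChange W L)) := Point.map (W' := W) (Algebra.ofId K ↥L)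
  let g : ↥H × ↥(AddCommGroup.torsion (Affine.Point (Affine.baseChange W K))) →+ (Affine.Point (Affine.baseChange W L)) :=
    (ψ.comp H.subtype).coprod (ι.comp (AddCommGroup.torsion (Affine.Point (Affine.baseChange W K))).subtype)
  have hg : ∀ p : ↥H × ↥(AddCommGroup.torsion (Affine.Point (Affine.baseChange W K))), g p = ψ ↑p.1 + ι ↑p.2 := fun p => rfl
  have hψinj : Function.Injective ψ :=
    (TwistAux.twHom_injective T).comp (Point.map_injective (W' := Wd) (Algebra.ofId K ↥L))
  have hιinj : Function.Injective ι := Point.map_injective (W' := W) (Algebra.ofId K ↥L)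
  have hψsome : ∀ {x y : K} (p : (Wd.baseChange K).toAffine.Nonsingular x y),
      ψ (Point.some _ _ p) = Point.some _ _ ((TwistAux.tw_nonsingular T _ _).mp
        ((baseChange_nonsingular (W := Wd) (Algebra.ofId K ↥L).injective x y).mpr p)) := by
    intro x y p
    show TwistAux.twHom T (Point.map (W' := Wd) (Algebra.ofId K ↥L) (Point.some _ _ p)) = _
    rw [Point.map_some, TwistAux.twHom_some]
  have hnegYdK : ∀ x y : K, (Wd.baseChange K).toAffine.negY x y = -y := by
    intro x y
    simp [negY, WeierstrassCurve.baseChange, hWd]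
  have hnegYK : ∀ x y : K, (W.baseChange K).toAffine.negY x y = -y := by
    intro x y
    simp [negY, WeierstrassCurve.baseChange, hW]
  have hnegYKb : ∀ x y : AlgebraicClosure K,
      (W.baseChange (AlgebraicClosure K)).toAffine.negY x y = -y := by
    intro x y
    simp [negY, WeierstrassCurve.baseChange, hW]
  have hval : ∀ k : K, L.val ((Algebra.ofId K ↥L) k) = algebraMap K (AlgebraicClosure K) k :=
    fun k => L.val.commutes k
  have hdiv2 : ∀ k : K, L.val ((Algebra.ofId K ↥L) k / s ^ 2) =
      algebraMap K (AlgebraicClosure K) k / (L.val s) ^ 2 := fun k => by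
    rw [map_div₀, map_pow, hval]
  have hdiv3 : ∀ k : K, L.val ((Algebra.ofId K ↥L) k / s ^ 3) =
      algebraMap K (AlgebraicClosure K) k / (L.val s) ^ 3 := fun k => by
    rw [map_div₀, map_pow, hval]
  have hσs2 : ∀ σ : AlgebraicClosure K ≃ₐ[K] AlgebraicClosure K,
      σ (L.val s) = L.val s ∨ σ (L.val s) = -(L.val s) := by
    intro σ
    have hsb : L.val s * L.val s = algebraMap K (AlgebraicClosure K) d := by
      rw [← _root_.map_mul, ← pow_two, hs]; exact L.val.commutes d
    have h2 : σ (L.val s) * σ (L.val s) = L.val s * L.val s := by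
      rw [← _root_.map_mul, hsb, AlgEquiv.commutes]
    exact mul_self_eq_mul_self_iff.mp h2
  refine ⟨g.range, ?_, ?_, ?_⟩
  · -- torsion
    rintro P hP
    obtain ⟨⟨h, t⟩, rfl⟩ := hP
    rw [hg]
    refine AddSubgroup.add_mem _ ?_ ?_
    · exact (AddCommGroup.mem_torsion _).mpr
        (AddMonoidHom.isOfFinAddOrder ψ ((AddCommGroup.mem_torsion _).mp (hHtor h.2)))
    · exact (AddCommGroup.mem_torsion _).mpr
        (AddMonoidHom.isOfFinAddOrder ι ((AddCommGroup.mem_torsion _).mp t.2))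
  · -- Galois invariance
    intro σ
    have claimι : ∀ (τ : AlgebraicClosure K ≃ₐ[K] AlgebraicClosure K) (t₀ : (Affine.Point (Affine.baseChange W K))),
        Point.map (W' := W) τ.toAlgHom (Point.map (W' := W) L.val (ι t₀)) = Point.map (W' := W) L.val (ι t₀) := by
      intro τ t₀
      show Point.map (W' := W) τ.toAlgHom (Point.map (W' := W) L.val (Point.map (W' := W) (Algebra.ofId K ↥L) t₀)) = _
      rw [Point.map_map, Point.map_map,
        show (τ.toAlgHom.comp L.val).comp (Algebra.ofId K ↥L) =
          L.val.comp (Algebra.ofId K ↥L) from Subsingleton.elim _ _, ← Point.map_map]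
    have claimψp : ∀ (τ : AlgebraicClosure K ≃ₐ[K] AlgebraicClosure K),
        τ (L.val s) = L.val s → ∀ P : (Affine.Point (Affine.baseChange Wd K)),
        Point.map (W' := W) τ.toAlgHom (Point.map (W' := W) L.val (ψ P)) = Point.map (W' := W) L.val (ψ P) := by
      intro τ hτ P
      have hcom : ∀ k : K, τ.toAlgHom (algebraMap K (AlgebraicClosure K) k) =
          algebraMap K (AlgebraicClosure K) k := fun k => τ.toAlgHom.commutes k
      have hτA : τ.toAlgHom (L.val s) = L.val s := hτ
      cases P with
      | zero =>
        rw [show (Point.zero : (Affine.Point (Affine.baseChange Wd K))) = 0 from rfl, _root_.map_zero, _root_.map_zero,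
          _root_.map_zero]
      | @some x y p =>
        rw [hψsome, Point.map_some, Point.map_some]
        simp only [Point.some.injEq]
        constructor
        · rw [hdiv2, map_div₀, map_pow, hcom, hτA]
        · rw [hdiv3, map_div₀, map_pow, hcom, hτA]
    have claimψm : ∀ (τ : AlgebraicClosure K ≃ₐ[K] AlgebraicClosure K),
        τ (L.val s) = -(L.val s) → ∀ P : (Affine.Point (Affine.baseChange Wd K)),
        Point.map (W' := W) τ.toAlgHom (Point.map (W' := W) L.val (ψ P)) = Point.map (W' := W) L.val (ψ (-P)) := by
      intro τ hτ P
      have hcom : ∀ k : K, τ.toAlgHom (algebraMap K (AlgebraicClosure K) k) =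
          algebraMap K (AlgebraicClosure K) k := fun k => τ.toAlgHom.commutes k
      have hτA : τ.toAlgHom (L.val s) = -(L.val s) := hτ
      cases P with
      | zero =>
        rw [show (Point.zero : (Affine.Point (Affine.baseChange Wd K))) = 0 from rfl, _root_.neg_zero, _root_.map_zero,
          _root_.map_zero, _root_.map_zero]
      | @some x y p =>
        rw [show -Point.some _ _ p = Point.some _ _ ((nonsingular_neg ..).mpr p) from rfl]
        rw [hψsome, hψsome, Point.map_some, Point.map_some, Point.map_some]
        simp only [Point.some.injEq]
        constructor
        · rw [hdiv2, map_div₀, map_pow, hcom, hτA, neg_sq]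
        · rw [hdiv3, map_div₀, map_pow, hcom, hτA, hnegYdK, hdiv3,
            _root_.map_neg, neg_div, Odd.neg_pow (by decide), div_neg]
    have key : ∀ (τ : AlgebraicClosure K ≃ₐ[K] AlgebraicClosure K), ∀ P ∈ g.range,
        ∃ P' ∈ g.range, Point.map (W' := W) τ.toAlgHom (Point.map (W' := W) L.val P) = Point.map (W' := W) L.val P' := by
      intro τ P hP
      obtain ⟨⟨h, t⟩, rfl⟩ := hP
      rcases hσs2 τ with hτ | hτ
      · exact ⟨g (h, t), ⟨(h, t), rfl⟩,
          by rw [hg, _root_.map_add, _root_.map_add, claimψp τ hτ, claimι τ]⟩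
      · refine ⟨g (-h, t), ⟨(-h, t), rfl⟩, ?_⟩
        rw [hg, hg, _root_.map_add, _root_.map_add, _root_.map_add, claimψm τ hτ, claimι τ]
        rfl
    have hinv : ∀ x : (Affine.Point (Affine.baseChange W (AlgebraicClosure K))),
        Point.map (W' := W) σ.toAlgHom (Point.map (W' := W) σ.symm.toAlgHom x) = x := by
      intro x
      cases x with
      | zero => rfl
      | some _ _ p =>
        rw [Point.map_some, Point.map_some]
        simp only [Point.some.injEq]
        exact ⟨σ.apply_symm_apply _, σ.apply_symm_apply _⟩
    refine le_antisymm ?_ ?_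
    · rintro x hx
      obtain ⟨y, hy, rfl⟩ := hx
      obtain ⟨P, hP, rfl⟩ := hy
      obtain ⟨P', hP', hPP⟩ := key σ P hP
      exact ⟨P', hP', hPP.symm⟩
    · rintro x hx
      obtain ⟨P, hP, rfl⟩ := hx
      obtain ⟨P', hP', hPP⟩ := key σ.symm P hP
      refine ⟨Point.map (W' := W) L.val P', ⟨P', hP', rfl⟩, ?_⟩
      rw [← hPP, hinv]
  · -- isomorphism
    have hofId : ∀ k : K, (Algebra.ofId K ↥L) k = algebraMap K ↥L k := fun _ => rfl
    have hginj : Function.Injective g := by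
      refine (injective_iff_map_eq_zero g).mpr ?_
      rintro ⟨h, t⟩ hgz
      rw [hg] at hgz
      have he : ψ ↑h = ι (-(↑t : (Affine.Point (Affine.baseChange W K)))) := by
        rw [_root_.map_neg]
        exact eq_neg_of_add_eq_zero_left hgz
      have h2 : ψ ↑h + ψ ↑h = 0 := by
        rcases hP : (↑h : (Affine.Point (Affine.baseChange Wd K))) with _ | @⟨x₀, y₀, p⟩
        · show ψ 0 + ψ 0 = 0
          rw [_root_.map_zero, add_zero]
        · rw [hP] at he
          rcases hQ : (-(↑t : (Affine.Point (Affine.baseChange W K)))) with _ | @⟨x₁, y₁, pq⟩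
          · rw [hQ] at he
            rw [show (ι Point.zero : (Affine.Point (Affine.baseChange W ↥L))) = 0 from rfl, hψsome] at he
            exact absurd he (some_ne_zero _)
          · rw [hQ] at he
            have hxy := he
            rw [hψsome, Point.map_some] at hxy
            simp only [Point.some.injEq] at hxy
            obtain ⟨hx, hy⟩ := hxy
            simp only [hofId] at hx hy
            have hy₁ : y₁ = 0 := by
              by_contra hy₁
              apply hnsq (y₀ / (y₁ * d))
              have hqd : algebraMap K ↥L d ≠ 0 :=
                fun e => hd (hqinj (by rw [e, _root_.map_zero]))
              have hqy₁ : algebraMap K ↥L y₁ ≠ 0 :=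
                fun e => hy₁ (hqinj (by rw [e, _root_.map_zero]))
              have e1 : algebraMap K ↥L y₀ = algebraMap K ↥L y₁ * s ^ 3 :=
                (div_eq_iff (pow_ne_zero 3 hs0)).mp hy
              rw [map_div₀, map_mul, div_eq_iff (mul_ne_zero hqy₁ hqd), e1, ← hs]
              ring
            have hsum : Point.some _ _ pq + Point.some _ _ pq = 0 := by
              refine Point.add_self_of_Y_eq ?_
              rw [hnegYK, hy₁, _root_.neg_zero]
            rw [he, ← _root_.map_add, hsum, _root_.map_zero]
      have hh : (↑h : (Affine.Point (Affine.baseChange Wd K))) + (↑h : (Affine.Point (Affine.baseChange Wd K))) = 0 := hψinj (by rw [_root_.map_add, h2, _root_.map_zero])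
      have hh0 : h = 0 := by
        have hcard : Nat.card ↥H ≠ 0 := by
          intro e
          rw [e] at hHodd
          simpa using hHodd
        have : Finite ↥H := Nat.finite_of_card_ne_zero hcard
        have hdvd2 : addOrderOf h ∣ 2 := addOrderOf_dvd_iff_nsmul_eq_zero.mpr (by
          rw [two_nsmul]
          exact Subtype.ext hh)
        have hdvdc : addOrderOf h ∣ Nat.card ↥H := addOrderOf_dvd_natCard h
        have hco : Nat.Coprime 2 (Nat.card ↥H) := Nat.coprime_two_left.mpr hHodd
        have : addOrderOf h ∣ 1 := by
          have := Nat.dvd_gcd hdvd2 hdvdc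
          rwa [Nat.Coprime.gcd_eq_one hco] at this
        exact AddMonoid.addOrderOf_eq_one_iff.mp (Nat.dvd_one.mp this)
      have ht0 : t = 0 := by
        have h0 : (↑h : (Affine.Point (Affine.baseChange Wd K))) = 0 := by rw [hh0]; rfl
        rw [h0, _root_.map_zero] at he
        have := hιinj (a₁ := -(↑t : (Affine.Point (Affine.baseChange W K)))) (a₂ := 0) (by rw [_root_.map_zero]; exact he.symm)
        exact Subtype.ext (neg_eq_zero.mp this)
      rw [hh0, ht0]
      rfl
    exact ⟨(AddMonoidHom.ofInjective hginj).symm⟩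
end

section
/- Let p be a prime with p ≡ 2 (mod 3) and let E be an elliptic curve over the finite field F_p given by y² = x³ + B (i.e. a short Weierstrass equation with A = 0, so j(E) = 0). Then |E(F_p)| = p + 1 and |E(F_{p²})| = (p + 1)². -/
open WeierstrassCurve WeierstrassCurve.Affine Finset

section Helpers

set_option linter.unusedSectionVars false



variable {F : Type*} [Field F] [Fintype F] [DecidableEq F]

lemma my_eqn_iff (b x y : F) :
    (⟨0,0,0,0,b⟩ : WeierstrassCurve F).toAffine.Equation x y ↔ y ^ 2 = x ^ 3 + b := by
  rw [WeierstrassCurve.Affine.equation_iff]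
  constructor <;> intro h <;> linear_combination h

noncomputable def ptEquiv (b : F) (hΔ : (⟨0,0,0,0,b⟩ : WeierstrassCurve F).Δ ≠ 0) :
    WeierstrassCurve.Affine.Point (⟨0,0,0,0,b⟩ : WeierstrassCurve F) ≃
      Option {xy : F × F // xy.2 ^ 2 = xy.1 ^ 3 + b} where
  toFun P := match P with
    | .zero => none
    | @Point.some _ _ _ x y h => some ⟨(x, y), (my_eqn_iff b x y).mp h.1⟩
  invFun o := match o with
    | none => .zero
    | some ⟨(x, y), h⟩ => .some x y ((WeierstrassCurve.Affine.equation_iff_nonsingular_of_Δ_ne_zero (W := (⟨0,0,0,0,b⟩ : WeierstrassCurve F)) hΔ).mp ((my_eqn_iff b x y).mpr h))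
  left_inv P := by cases P <;> rfl
  right_inv o := by rcases o with _ | ⟨⟨x, y⟩, h⟩ <;> rfl

lemma card_point (hF2 : ringChar F ≠ 2) (b : F) (V : WeierstrassCurve F)
    (hV : V = ⟨0,0,0,0,b⟩) (hΔ : V.Δ ≠ 0) :
    (Nat.card (WeierstrassCurve.Affine.Point V) : ℤ)
      = 1 + Fintype.card F + ∑ x : F, ((quadraticChar F) (x ^ 3 + b) : ℤ) := by
  subst hV
  rw [Nat.card_congr (ptEquiv b hΔ), Nat.card_eq_fintype_card, Fintype.card_option,
    Fintype.card_congr (Equiv.subtypeProdEquivSigmaSubtype (fun x y : F => y ^ 2 = x ^ 3 + b)),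
    Fintype.card_sigma]
  push_cast
  have key : ∀ x : F, (Fintype.card {y : F // y ^ 2 = x ^ 3 + b} : ℤ)
      = quadraticChar F (x ^ 3 + b) + 1 := by
    intro x
    rw [← quadraticChar_card_sqrts hF2 (x ^ 3 + b)]
    norm_cast
    rw [Set.toFinset_card]
    exact Fintype.card_congr (Equiv.setCongr rfl)
  rw [Finset.sum_congr rfl (fun x _ => key x)]
  rw [Finset.sum_add_distrib]
  simp [Finset.card_univ]
  ring

variable {K : Type*} [Field K] [Fintype K] [DecidableEq K]

lemma omega_sq_add (ω : K) (hω3 : ω ^ 3 = 1) (hω1 : ω ≠ 1) : ω ^ 2 + ω + 1 = 0 := by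
  have h : (ω - 1) * (ω ^ 2 + ω + 1) = 0 := by linear_combination hω3
  rcases mul_eq_zero.mp h with h | h
  · exact absurd (sub_eq_zero.mp h) hω1
  · exact h

lemma cube_fiber_eq (ω : K) (hω3 : ω ^ 3 = 1) (hω1 : ω ≠ 1) (x₀ : K) (hx₀ : x₀ ≠ 0) :
    Finset.filter (fun x : K => x ^ 3 = x₀ ^ 3) Finset.univ = {x₀, ω * x₀, ω ^ 2 * x₀} := by
  ext x
  simp only [mem_filter, mem_univ, true_and, mem_insert, mem_singleton]
  constructor
  · intro h
    have key : (x - x₀) * (x - ω * x₀) * (x - ω ^ 2 * x₀) = 0 := by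
      have hsum := omega_sq_add ω hω3 hω1
      linear_combination h + (x * x₀ ^ 2 - x ^ 2 * x₀) * hsum + (x * x₀ ^ 2 - x₀ ^ 3) * hω3
    rcases mul_eq_zero.mp key with h' | h'
    · rcases mul_eq_zero.mp h' with h'' | h''
      · exact Or.inl (sub_eq_zero.mp h'')
      · exact Or.inr (Or.inl (sub_eq_zero.mp h''))
    · exact Or.inr (Or.inr (sub_eq_zero.mp h'))
  · rintro (rfl | rfl | rfl)
    · rfl
    · rw [mul_pow, hω3, one_mul]
    · rw [mul_pow, ← pow_mul]
      norm_num
      rw [show (6:ℕ) = 3*2 by rfl, pow_mul, hω3, one_pow, one_mul]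
  
lemma omega_sq_ne_one (ω : K) (hω3 : ω ^ 3 = 1) (hω1 : ω ≠ 1) : ω ^ 2 ≠ 1 := by
  intro h
  apply hω1
  calc ω = ω * ω ^ 2 := by rw [h, mul_one]
  _ = ω ^ 3 := by ring
  _ = 1 := hω3

lemma cube_fiber_card (ω : K) (hω3 : ω ^ 3 = 1) (hω1 : ω ≠ 1) (x₀ : K) (hx₀ : x₀ ≠ 0) :
    (Finset.filter (fun x : K => x ^ 3 = x₀ ^ 3) Finset.univ).card = 3 := by
  rw [cube_fiber_eq ω hω3 hω1 x₀ hx₀]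
  have hωx : x₀ ≠ ω * x₀ := by
    intro h
    exact hω1 (mul_right_cancel₀ hx₀ (by rw [one_mul, ← h])).symm
  have hω2x : x₀ ≠ ω ^ 2 * x₀ := by
    intro h
    exact omega_sq_ne_one ω hω3 hω1 (mul_right_cancel₀ hx₀ (by rw [one_mul, ← h])).symm
  have hωω2 : ω * x₀ ≠ ω ^ 2 * x₀ := by
    intro h
    have h1 : ω * x₀ = ω * (ω * x₀) := by linear_combination h
    have hω0 : ω ≠ 0 := fun hω0 => hω1 (by rw [← hω3, hω0]; ring)
    have h2 : x₀ = ω * x₀ := mul_left_cancel₀ hω0 h1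
    exact hωx h2
  rw [Finset.card_insert_of_notMem (by simp [hωx, hω2x]),
    Finset.card_insert_of_notMem (by simp [hωω2]), Finset.card_singleton]

lemma psi_cube_val (ψ : MulChar K ℂ) (hψ3 : ψ ^ 3 = 1) {t : K} (ht : t ≠ 0) : ψ t ^ 3 = 1 := by
  rw [← MulChar.pow_apply' ψ (by norm_num) t, hψ3, MulChar.one_apply (isUnit_iff_ne_zero.mpr ht)]

lemma exists_cube_of_psi_eq_one (ψ : MulChar K ℂ) (hψ3 : ψ ^ 3 = 1) (hψ1 : ψ ≠ 1) {t : K}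
    (ht : t ≠ 0) (h : ψ t = 1) : ∃ x : K, x ^ 3 = t := by
  haveI : Fact (Nat.Prime 3) := ⟨Nat.prime_three⟩
  obtain ⟨g, hg⟩ := IsCyclic.exists_generator (α := Kˣ)
  set tu := (isUnit_iff_ne_zero.mpr ht).unit with htu
  have htuv : (tu : K) = t := (isUnit_iff_ne_zero.mpr ht).unit_spec
  obtain ⟨k, hk⟩ := mem_powers_iff_mem_zpowers.mpr (hg tu)
  set z := ψ (g : K) with hz
  have hz3 : z ^ 3 = 1 := psi_cube_val ψ hψ3 (Units.ne_zero g)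
  have hz1 : z ≠ 1 := by
    intro hzone
    apply hψ1
    rw [MulChar.eq_one_iff]
    intro a
    obtain ⟨n, hn⟩ := mem_powers_iff_mem_zpowers.mpr (hg a)
    rw [← hn, Units.val_pow_eq_pow_val, map_pow, ← hz, hzone, one_pow]
  have hordz : orderOf z = 3 := orderOf_eq_prime hz3 hz1
  have hψt : ψ t = z ^ k := by
    rw [← htuv, ← hk, Units.val_pow_eq_pow_val, map_pow, ← hz]
  have h3k : 3 ∣ k := by
    rw [← hordz]
    exact orderOf_dvd_of_pow_eq_one (by rw [← hψt, h])
  obtain ⟨m, rfl⟩ := h3k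
  exact ⟨(g : K) ^ m, by rw [← pow_mul, mul_comm m 3, ← htuv, ← hk, Units.val_pow_eq_pow_val]⟩

lemma char_count (ψ : MulChar K ℂ) (hψ3 : ψ ^ 3 = 1) (hψ1 : ψ ≠ 1) (ω : K) (hω3 : ω ^ 3 = 1)
    (hω1 : ω ≠ 1) (t : K) :
    ((Finset.filter (fun x : K => x ^ 3 = t) Finset.univ).card : ℂ) = 1 + ψ t + ψ t ^ 2 := by
  rcases eq_or_ne t 0 with rfl | ht
  · have hf : Finset.filter (fun x : K => x ^ 3 = 0) Finset.univ = {0} := by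
      ext x
      simp [pow_eq_zero_iff (three_ne_zero)]
    rw [hf, Finset.card_singleton, MulChar.map_nonunit ψ (by simp)]
    norm_num
  by_cases hcube : ∃ x : K, x ^ 3 = t
  · obtain ⟨x₀, rfl⟩ := hcube
    have hx₀ : x₀ ≠ 0 := by
      rintro rfl
      rw [zero_pow three_ne_zero] at ht
      exact ht rfl
    rw [cube_fiber_card ω hω3 hω1 x₀ hx₀]
    have h1 : ψ (x₀ ^ 3) = 1 := by
      rw [map_pow, ← MulChar.pow_apply' ψ (by norm_num) x₀, hψ3,
        MulChar.one_apply (isUnit_iff_ne_zero.mpr hx₀)]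
    rw [h1]
    norm_num
  · have hf : Finset.filter (fun x : K => x ^ 3 = t) Finset.univ = ∅ := by
      rw [Finset.filter_eq_empty_iff]
      push_neg at hcube
      exact fun x _ => hcube x
    rw [hf]
    have hz3 : ψ t ^ 3 = 1 := psi_cube_val ψ hψ3 ht
    have hz1 : ψ t ≠ 1 := fun h => hcube (exists_cube_of_psi_eq_one ψ hψ3 hψ1 ht h)
    have key : (ψ t - 1) * (1 + ψ t + ψ t ^ 2) = 0 := by linear_combination hz3
    rcases mul_eq_zero.mp key with h | h
    · exact absurd (sub_eq_zero.mp h) hz1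
    · simp [← h]

lemma cube_bij (p : ℕ) [Fact p.Prime] (hp : p % 3 = 2) :
    Function.Bijective (fun x : ZMod p => x ^ 3) := by
  have hppos : 2 ≤ p := (Fact.out : p.Prime).two_le
  have hco : Nat.gcd 3 (p - 1) = 1 := by
    have : ¬ (3 ∣ (p - 1)) := by omega
    exact (Nat.prime_three.coprime_iff_not_dvd).mpr this
  have hinj : Function.Injective (fun x : ZMod p => x ^ 3) := by
    intro x y hxy
    simp only at hxy
    rcases eq_or_ne y 0 with rfl | hy
    · rw [zero_pow (by norm_num)] at hxy
      exact pow_eq_zero_iff (n := 3) (by norm_num) |>.mp hxy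
    rcases eq_or_ne x 0 with rfl | hx
    · rw [zero_pow (by norm_num)] at hxy
      exact (pow_eq_zero_iff (n := 3) (by norm_num) |>.mp hxy.symm).symm
    · set u := x * y⁻¹ with hu
      have hyu : u ≠ 0 := mul_ne_zero hx (inv_ne_zero hy)
      have hu3 : u ^ 3 = 1 := by
        rw [hu, mul_pow, hxy, inv_pow, mul_inv_cancel₀ (pow_ne_zero _ hy)]
      have hup : u ^ (p - 1) = 1 := ZMod.pow_card_sub_one_eq_one hyu
      have h1 : orderOf u ∣ Nat.gcd 3 (p - 1) :=
        Nat.dvd_gcd (orderOf_dvd_of_pow_eq_one hu3) (orderOf_dvd_of_pow_eq_one hup)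
      rw [hco, Nat.dvd_one, orderOf_eq_one_iff] at h1
      have : x = u * y := by rw [hu, mul_assoc, inv_mul_cancel₀ hy, mul_one]
      rw [this, h1, one_mul]
  exact ⟨hinj, Finite.surjective_of_injective hinj⟩

lemma sum_zmod_eq_zero (p : ℕ) [Fact p.Prime] (hp : p % 3 = 2) (hp2 : p ≠ 2) (b : ZMod p) :
    ∑ x : ZMod p, ((quadraticChar (ZMod p)) (x ^ 3 + b) : ℤ) = 0 := by
  have hchar : ringChar (ZMod p) ≠ 2 := by
    rw [ZMod.ringChar_zmod_n]; exact hp2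
  have h1 : ∑ x : ZMod p, ((quadraticChar (ZMod p)) (x ^ 3 + b) : ℤ)
      = ∑ t : ZMod p, ((quadraticChar (ZMod p)) (t + b) : ℤ) :=
    Fintype.sum_bijective _ (cube_bij p hp) _ _ (fun x => rfl)
  have h2 : ∑ t : ZMod p, ((quadraticChar (ZMod p)) (t + b) : ℤ)
      = ∑ s : ZMod p, ((quadraticChar (ZMod p)) s : ℤ) :=
    Fintype.sum_bijective _ (Equiv.addRight b).bijective _ _ (fun x => rfl)
  rw [h1, h2, quadraticChar_sum_zero hchar]

variable {K : Type*} [Field K] [Fintype K] [DecidableEq K]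

lemma psi_val_one (p : ℕ) (ψ : MulChar K ℂ) (hψ3 : ψ ^ 3 = 1)
    (hco : Nat.gcd 3 (p - 1) = 1) {a : K} (ha : a ^ (p - 1) = 1) (hp1 : p - 1 ≠ 0) :
    ψ a = 1 := by
  have ha0 : a ≠ 0 := by
    intro rfl0
    rw [rfl0, zero_pow hp1] at ha
    exact zero_ne_one ha
  have h3 : ψ a ^ 3 = 1 := by
    rw [← MulChar.pow_apply' ψ (by norm_num) a, hψ3, MulChar.one_apply (isUnit_iff_ne_zero.mpr ha0)]
  have hp : ψ a ^ (p - 1) = 1 := by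
    rw [← map_pow, ha, map_one]
  have : orderOf (ψ a) ∣ Nat.gcd 3 (p - 1) :=
    Nat.dvd_gcd (orderOf_dvd_of_pow_eq_one h3) (orderOf_dvd_of_pow_eq_one hp)
  rw [hco, Nat.dvd_one, orderOf_eq_one_iff] at this
  exact this

lemma exists_order_three (p : ℕ) [Fact p.Prime] (hcard : Fintype.card K = p ^ 2)
    (hp3 : p % 3 = 2) : ∃ u : Kˣ, orderOf u = 3 := by
  obtain ⟨g, hg⟩ := IsCyclic.exists_ofOrder_eq_natCard (α := Kˣ)
  rw [Nat.card_eq_fintype_card, Fintype.card_units, hcard] at hg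
  have hp2 : 2 ≤ p := (Fact.out : p.Prime).two_le
  have hsq : 4 ≤ p ^ 2 := by nlinarith
  have h3 : 3 ∣ p ^ 2 - 1 := by
    obtain ⟨k, hk⟩ : ∃ k, p = 3 * k + 2 := ⟨p / 3, by omega⟩
    have : p ^ 2 = 3 * (3 * k ^ 2 + 4 * k + 1) + 1 := by rw [hk]; ring
    omega
  refine ⟨g ^ ((p ^ 2 - 1) / 3), ?_⟩
  rw [orderOf_pow, hg, Nat.gcd_eq_right (Nat.div_dvd_of_dvd h3),
    Nat.div_div_self h3 (by omega)]

lemma shift_sum (θ χ : MulChar K ℂ) {c : K} (hc : c ≠ 0) (hθ : θ (-c) = 1) (hχ : χ c = 1) :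
    ∑ t : K, θ t * χ (t + c) = jacobiSum θ χ := by
  rw [jacobiSum, ← Equiv.sum_comp (Equiv.mulLeft₀ (-c) (neg_ne_zero.mpr hc))
    (fun t => θ t * χ (t + c))]
  apply Finset.sum_congr rfl
  intro u _
  simp only [Equiv.mulLeft₀_apply]
  rw [map_mul, hθ, one_mul]
  congr 1
  have h : -c * u + c = c * (1 - u) := by ring
  rw [h, map_mul, hχ, one_mul]

lemma sum_K (p : ℕ) [Fact p.Prime] [Algebra (ZMod p) K]
    (hcard : Fintype.card K = p ^ 2) (hp3 : p % 3 = 2) (hp2 : p ≠ 2)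
    (b : ZMod p) (hb : b ≠ 0) :
    (∑ x : K, ((quadraticChar K) (x ^ 3 + algebraMap (ZMod p) K b) : ℤ)) = 2 * p ∨
    (∑ x : K, ((quadraticChar K) (x ^ 3 + algebraMap (ZMod p) K b) : ℤ)) = -(2 * p) := by
  have hprime : p.Prime := Fact.out
  have hp2' : 2 ≤ p := hprime.two_le
  have hodd : Odd p := hprime.odd_of_ne_two hp2
  obtain ⟨kp0, hkp0⟩ := id hodd
  have hkp : p = 2 * kp0 + 1 := by omega
  set kp := kp0 with hkpdef
  haveI hKp : CharP K p := charP_of_injective_algebraMap (algebraMap (ZMod p) K).injective p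
  have hring : ringChar K = p := ringChar.eq K p
  have hK2 : ringChar K ≠ 2 := by rw [hring]; exact hp2
  set c := algebraMap (ZMod p) K b with hcdef
  have hc0 : c ≠ 0 := fun h => hb ((algebraMap (ZMod p) K).injective (by rw [map_zero, ← h]))
  have hcp1 : c ^ (p - 1) = 1 := by
    rw [hcdef, ← map_pow, ZMod.pow_card_sub_one_eq_one hb, map_one]
  have hcp : c ^ p = c := by rw [hcdef, ← map_pow, ZMod.pow_card]
  have hco : Nat.gcd 3 (p - 1) = 1 := (Nat.prime_three.coprime_iff_not_dvd).mpr (by omega)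
  -- ω of order 3 in Kˣ
  obtain ⟨u, hu⟩ := exists_order_three p hcard hp3
  have hu3 : u ^ 3 = 1 := by rw [← hu]; exact pow_orderOf_eq_one u
  have hω3 : ((u : K)) ^ 3 = 1 := by rw [← Units.val_pow_eq_pow_val, hu3, Units.val_one]
  have hω1 : ((u : K)) ≠ 1 := by
    intro h
    have h1 : u = 1 := Units.ext h
    rw [h1, orderOf_one] at hu
    norm_num at hu
  -- cubic character ψ
  haveI : NeZero ((Monoid.exponent Kˣ : ℂ)) :=
    ⟨Nat.cast_ne_zero.mpr Monoid.exponent_ne_zero_of_finite⟩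
  obtain ⟨e⟩ := MulChar.mulEquiv_units K ℂ
  set ψ := e.symm u with hψdef
  have hordψ : orderOf ψ = 3 := by
    rw [hψdef, ← hu]
    exact orderOf_injective e.symm.toMonoidHom e.symm.injective u
  have hψ3 : ψ ^ 3 = 1 := by rw [← hordψ]; exact pow_orderOf_eq_one ψ
  have hψ1 : ψ ≠ 1 := by
    intro h
    rw [h, orderOf_one] at hordψ
    norm_num at hordψ
  -- quadratic character χ (ℂ-valued)
  set χ := (quadraticChar K).ringHomComp (Int.castRingHom ℂ) with hχdef
  have hχ1 : χ ≠ 1 :=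
    (MulChar.ringHomComp_ne_one_iff Int.cast_injective).mpr (quadraticChar_ne_one hK2)
  have hχq : χ.IsQuadratic := (quadraticChar_isQuadratic K).comp _
  have hχinv : χ⁻¹ = χ := hχq.inv
  have hψχ : ψ * χ ≠ 1 := by
    intro h
    have h2 : χ ^ 2 = 1 := hχq.sq_eq_one
    have hψeq : ψ = χ⁻¹ := by rw [eq_inv_iff_mul_eq_one]; exact h
    have hψ2 : ψ ^ 2 = 1 := by rw [hψeq, hχinv, h2]
    have : ψ = 1 := by
      calc ψ = ψ ^ 3 * (ψ ^ 2)⁻¹ := by group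
      _ = 1 := by rw [hψ3, hψ2, inv_one, mul_one]
    exact hψ1 this
  have hψinv : ψ⁻¹ = ψ ^ 2 := by
    calc ψ⁻¹ = ψ ^ 3 * ψ⁻¹ := by rw [hψ3, one_mul]
    _ = ψ ^ 2 := by group
  -- character values at c and -c
  have hχc : χ c = 1 := by
    have h1 : Fintype.card K / 2 = (p - 1) * (kp + 1) := by
      have h2 : p ^ 2 = 2 * ((p - 1) * (kp + 1)) + 1 := by
        have h3 : p - 1 = 2 * kp := by omega
        have h4 : p = 2 * kp + 1 := by omega
        rw [h3, h4]; ring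
      rw [hcard]; omega
    have hfc : c ^ (Fintype.card K / 2) = 1 := by rw [h1, pow_mul, hcp1, one_pow]
    have hsq : IsSquare c := (FiniteField.isSquare_iff hK2 hc0).mpr hfc
    have hq1 : quadraticChar K c = 1 := (quadraticChar_one_iff_isSquare hc0).mpr hsq
    rw [hχdef, MulChar.ringHomComp_apply, hq1]
    norm_num
  have hψc : ψ (-c) = 1 := by
    apply psi_val_one p ψ hψ3 hco ?_ (by omega)
    have hpe : Even (p - 1) := ⟨kp, by omega⟩
    rw [hpe.neg_pow, hcp1]
  have hψ2c : (ψ ^ 2) (-c) = 1 := by rw [MulChar.pow_apply' ψ two_ne_zero, hψc, one_pow]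
  -- fiberwise decomposition
  set S := ∑ x : K, χ (x ^ 3 + c) with hSdef
  have fib : S = ∑ t : K, ((Finset.filter (fun x : K => x ^ 3 = t) Finset.univ).card : ℂ)
      * χ (t + c) := by
    rw [hSdef, ← Finset.sum_fiberwise_of_maps_to (g := fun x : K => x ^ 3)
      (fun x _ => Finset.mem_univ (x ^ 3)) (fun x => χ (x ^ 3 + c))]
    apply Finset.sum_congr rfl
    intro t _
    rw [Finset.sum_congr rfl (fun x hx => by rw [(Finset.mem_filter.mp hx).2]),
      Finset.sum_const, nsmul_eq_mul]
  have expand : S = (∑ t : K, χ (t + c)) + ((∑ t : K, ψ t * χ (t + c))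
      + ∑ t : K, ψ t ^ 2 * χ (t + c)) := by
    rw [fib, ← Finset.sum_add_distrib, ← Finset.sum_add_distrib]
    apply Finset.sum_congr rfl
    intro t _
    rw [char_count ψ hψ3 hψ1 (u : K) hω3 hω1 t]
    ring
  have h0 : ∑ t : K, χ (t + c) = 0 :=
    (Fintype.sum_equiv (Equiv.addRight c) _ (fun s => χ s) (fun t => rfl)).trans
      (MulChar.sum_eq_zero_of_ne_one hχ1)
  have hA1 : ∑ t : K, ψ t * χ (t + c) = jacobiSum ψ χ := shift_sum ψ χ hc0 hψc hχc
  have hA2 : ∑ t : K, ψ t ^ 2 * χ (t + c) = jacobiSum (ψ ^ 2) χ := by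
    rw [← shift_sum (ψ ^ 2) χ hc0 hψ2c hχc]
    exact Finset.sum_congr rfl (fun t _ => by rw [MulChar.pow_apply' ψ two_ne_zero])
  -- Frobenius identity
  have hfrobbij : Function.Bijective (frobenius K p) :=
    ⟨(frobenius K p).injective, Finite.surjective_of_injective (frobenius K p).injective⟩
  have hfrob : jacobiSum ψ χ = jacobiSum (ψ ^ 2) χ := by
    rw [← hA1, ← hA2, ← Equiv.sum_comp (Equiv.ofBijective _ hfrobbij)
      (fun t => ψ t * χ (t + c))]
    apply Finset.sum_congr rfl
    intro x _
    have hfx : (Equiv.ofBijective _ hfrobbij) x = x ^ p := rfl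
    rw [hfx]
    have hxc : χ (x ^ p + c) = χ (x + c) := by
      have h1 : x ^ p + c = (x + c) ^ p := by rw [add_pow_char, hcp]
      rw [h1, map_pow, ← MulChar.pow_apply' χ (by omega), hχq.pow_odd hodd]
    rw [hxc]
    congr 1
    rcases eq_or_ne x 0 with rfl | hx
    · rw [zero_pow (by omega : p ≠ 0), MulChar.map_nonunit ψ (by simp), zero_pow two_ne_zero]
    · have hpd : p = 3 * (p / 3) + 2 := by omega
      rw [map_pow]
      conv_lhs => rw [hpd]
      rw [pow_add, pow_mul, psi_cube_val ψ hψ3 hx, one_pow, one_mul]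
  -- Jacobi sum product
  have hJJ : jacobiSum ψ χ * jacobiSum ψ⁻¹ χ⁻¹ = (Fintype.card K : ℂ) := by
    apply jacobiSum_mul_jacobiSum_inv ?_ hψ1 hχ1 hψχ
    rw [hring, ringChar.eq ℂ 0]
    exact fun h => hprime.ne_zero h.symm
  have hsq2 : jacobiSum ψ χ ^ 2 = (p : ℂ) ^ 2 := by
    calc jacobiSum ψ χ ^ 2 = jacobiSum ψ χ * jacobiSum (ψ ^ 2) χ := by rw [sq, ← hfrob]
    _ = jacobiSum ψ χ * jacobiSum ψ⁻¹ χ⁻¹ := by rw [hψinv, hχinv]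
    _ = (p : ℂ) ^ 2 := by rw [hJJ, hcard]; push_cast; ring
  have hpm : jacobiSum ψ χ = (p : ℂ) ∨ jacobiSum ψ χ = -(p : ℂ) := by
    have hfactor : (jacobiSum ψ χ - p) * (jacobiSum ψ χ + p) = 0 := by linear_combination hsq2
    rcases mul_eq_zero.mp hfactor with h | h
    · exact Or.inl (sub_eq_zero.mp h)
    · exact Or.inr (eq_neg_of_add_eq_zero_left h)
  have hS2J : S = 2 * jacobiSum ψ χ := by
    rw [expand, h0, hA1, hA2, ← hfrob]; ring
  have hcast : ((∑ x : K, ((quadraticChar K) (x ^ 3 + c) : ℤ) : ℤ) : ℂ) = S := by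
    rw [hSdef]
    push_cast
    apply Finset.sum_congr rfl
    intro x _
    rw [hχdef, MulChar.ringHomComp_apply]
    norm_num
  rcases hpm with h | h
  · left
    have hfin : ((∑ x : K, ((quadraticChar K) (x ^ 3 + c) : ℤ) : ℤ) : ℂ) = ((2 * p : ℤ) : ℂ) := by
      rw [hcast, hS2J, h]; push_cast; ring
    exact_mod_cast hfin
  · right
    have hfin : ((∑ x : K, ((quadraticChar K) (x ^ 3 + c) : ℤ) : ℤ) : ℂ)
        = ((-(2 * p) : ℤ) : ℂ) := by
      rw [hcast, hS2J, h]; push_cast; ring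
    exact_mod_cast hfin

lemma three_dvd_card {K : Type*} [Field K] [Fintype K] [DecidableEq K]
    (ω : K) (hω3 : ω ^ 3 = 1) (hω1 : ω ≠ 1) (hK2 : ringChar K ≠ 2)
    (b : K) (hb : b ≠ 0) (hbsq : IsSquare b)
    (hΔ : (⟨0,0,0,0,b⟩ : WeierstrassCurve K).Δ ≠ 0) :
    3 ∣ Nat.card (WeierstrassCurve.Affine.Point (⟨0,0,0,0,b⟩ : WeierstrassCurve K)) := by
  have hN : Nat.card (WeierstrassCurve.Affine.Point (⟨0,0,0,0,b⟩ : WeierstrassCurve K))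
      = Fintype.card {xy : K × K // xy.2 ^ 2 = xy.1 ^ 3 + b} + 1 := by
    rw [Nat.card_congr (ptEquiv b hΔ), Nat.card_eq_fintype_card, Fintype.card_option]
  have hsig : Fintype.card {xy : K × K // xy.2 ^ 2 = xy.1 ^ 3 + b}
      = ∑ y : K, (Finset.filter (fun x : K => x ^ 3 = y ^ 2 - b) Finset.univ).card := by
    rw [Fintype.card_congr ((Equiv.prodComm K K).subtypeEquiv
      (p := fun xy : K × K => xy.2 ^ 2 = xy.1 ^ 3 + b)
      (q := fun yx : K × K => yx.1 ^ 2 = yx.2 ^ 3 + b) (fun a => Iff.rfl))]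
    rw [Fintype.card_congr (Equiv.subtypeProdEquivSigmaSubtype
      (fun y x : K => y ^ 2 = x ^ 3 + b)), Fintype.card_sigma]
    apply Finset.sum_congr rfl
    intro y _
    rw [Fintype.card_subtype]
    congr 1
    apply Finset.filter_congr
    intro x _
    constructor
    · intro h
      rw [h, add_sub_cancel_right]
    · intro h
      rw [h, sub_add_cancel]
  have hterm : ∀ y : K,
      (((Finset.filter (fun x : K => x ^ 3 = y ^ 2 - b) Finset.univ).card : ℕ) : ZMod 3)
        = if y ^ 2 = b then 1 else 0 := by
    intro y
    rcases eq_or_ne (y ^ 2 - b) 0 with h0 | h0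
    · have hyb : y ^ 2 = b := by linear_combination h0
      have hf : Finset.filter (fun x : K => x ^ 3 = y ^ 2 - b) Finset.univ = {0} := by
        ext x
        simp [h0, pow_eq_zero_iff three_ne_zero]
      rw [hf, if_pos hyb]
      norm_num
    · have hyb : ¬ (y ^ 2 = b) := fun h => h0 (by rw [h, sub_self])
      rw [if_neg hyb]
      by_cases hcube : ∃ x : K, x ^ 3 = y ^ 2 - b
      · obtain ⟨x₀, hx₀⟩ := hcube
        have hx0 : x₀ ≠ 0 := by
          intro h
          rw [h, zero_pow three_ne_zero] at hx₀
          exact h0 hx₀.symm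
        rw [← hx₀, cube_fiber_card ω hω3 hω1 x₀ hx0]
        decide
      · have hf : Finset.filter (fun x : K => x ^ 3 = y ^ 2 - b) Finset.univ = ∅ := by
          rw [Finset.filter_eq_empty_iff]
          push_neg at hcube
          exact fun x _ => hcube x
        rw [hf]
        norm_num
  have hcard2 : (Finset.filter (fun y : K => y ^ 2 = b) Finset.univ).card = 2 := by
    have h1 : (({x : K | x ^ 2 = b}.toFinset.card : ℤ)) = 2 := by
      rw [quadraticChar_card_sqrts hK2 b, (quadraticChar_one_iff_isSquare hb).mpr hbsq]
      norm_num
    have h2 : ({x : K | x ^ 2 = b}.toFinset.card : ℤ) = ((Finset.filter (fun y : K => y ^ 2 = b)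
        Finset.univ).card : ℤ) := by
      congr 1
      rw [Set.toFinset_setOf]
    omega
  have hnum : ((Fintype.card {xy : K × K // xy.2 ^ 2 = xy.1 ^ 3 + b} : ℕ) : ZMod 3) = 2 := by
    rw [hsig]
    push_cast
    rw [Finset.sum_congr rfl (fun y _ => hterm y), Finset.sum_boole, hcard2]
    decide
  rw [hN]
  rw [← ZMod.natCast_eq_zero_iff]
  push_cast
  rw [hnum]
  decide

lemma isSquare_algMap {K : Type*} [Field K] [Fintype K] [DecidableEq K] (p : ℕ) [Fact p.Prime]
    [Algebra (ZMod p) K] (hcard : Fintype.card K = p ^ 2) (hp2 : p ≠ 2) (hK2 : ringChar K ≠ 2)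
    (b : ZMod p) (hb : b ≠ 0) : IsSquare (algebraMap (ZMod p) K b) := by
  have hodd : Odd p := (Fact.out : p.Prime).odd_of_ne_two hp2
  obtain ⟨kp, hkp0⟩ := hodd
  have hkp : p = 2 * kp + 1 := by omega
  set c := algebraMap (ZMod p) K b with hcdef
  have hc0 : c ≠ 0 := fun h => hb ((algebraMap (ZMod p) K).injective (by rw [map_zero, ← h]))
  have hcp1 : c ^ (p - 1) = 1 := by
    rw [hcdef, ← map_pow, ZMod.pow_card_sub_one_eq_one hb, map_one]
  have h1 : Fintype.card K / 2 = (p - 1) * (kp + 1) := by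
    have h2 : p ^ 2 = 2 * ((p - 1) * (kp + 1)) + 1 := by
      have h3 : p - 1 = 2 * kp := by omega
      rw [h3, hkp]; ring
    rw [hcard]; omega
  have hfc : c ^ (Fintype.card K / 2) = 1 := by rw [h1, pow_mul, hcp1, one_pow]
  exact (FiniteField.isSquare_iff hK2 hc0).mpr hfc

end Helpers

/-- Let `p` be a prime with `p ≡ 2 (mod 3)` and `E : y² = x³ + B` an elliptic curve over `F_p`
(so `j(E) = 0`). Then `|E(F_p)| = p + 1` and `|E(F_{p²})| = (p + 1)²`. -/
theorem card_points_j_zero (p : ℕ) [Fact p.Prime] (hp : p % 3 = 2) (B : ZMod p)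
    (W : WeierstrassCurve (ZMod p)) (hW : W = ⟨0, 0, 0, 0, B⟩) (hΔ : W.Δ ≠ 0) :
    Nat.card (WeierstrassCurve.Affine.baseChange W (ZMod p)).Point = p + 1 ∧ Nat.card (WeierstrassCurve.Affine.baseChange W (GaloisField p 2)).Point = (p + 1) ^ 2 := by
  subst hW
  have hΔval : (⟨0, 0, 0, 0, B⟩ : WeierstrassCurve (ZMod p)).Δ = -432 * B ^ 2 := by
    simp [WeierstrassCurve.Δ, WeierstrassCurve.b₂, WeierstrassCurve.b₄, WeierstrassCurve.b₆,
      WeierstrassCurve.b₈]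
    ring
  rw [hΔval] at hΔ
  have hB : B ≠ 0 := by
    intro h
    exact hΔ (by rw [h]; ring)
  have hp2 : p ≠ 2 := by
    rintro rfl
    apply hΔ
    have h4 : (-432 : ZMod 2) = 0 := by
      have h5 : (432 : ZMod 2) = 0 := by rfl
      rw [show (-432 : ZMod 2) = -(432 : ZMod 2) from rfl, h5, neg_zero]
    rw [h4, zero_mul]
  have hΔ' : (⟨0, 0, 0, 0, B⟩ : WeierstrassCurve (ZMod p)).Δ ≠ 0 := by rw [hΔval]; exact hΔ
  constructor
  · -- part 1 : over F_p
    have hchar2 : ringChar (ZMod p) ≠ 2 := by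
      rw [ZMod.ringChar_zmod_n]; exact hp2
    have hV1 : (⟨0, 0, 0, 0, B⟩ : WeierstrassCurve (ZMod p)).baseChange (ZMod p)
        = ⟨0, 0, 0, 0, B⟩ := by
      refine WeierstrassCurve.ext ?_ ?_ ?_ ?_ ?_ <;>
        simp [WeierstrassCurve.baseChange, WeierstrassCurve.map]
    show Nat.card (WeierstrassCurve.Affine.Point
      ((⟨0, 0, 0, 0, B⟩ : WeierstrassCurve (ZMod p)).baseChange (ZMod p))) = p + 1
    rw [hV1]
    have hcast := card_point hchar2 B ⟨0, 0, 0, 0, B⟩ rfl hΔ'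
    rw [sum_zmod_eq_zero p hp hp2 B, ZMod.card p] at hcast
    have : (Nat.card (WeierstrassCurve.Affine.Point (⟨0, 0, 0, 0, B⟩ : WeierstrassCurve
        (ZMod p))) : ℤ) = ((p + 1 : ℕ) : ℤ) := by rw [hcast]; push_cast; ring
    exact_mod_cast this
  · -- part 2 : over F_{p²}
    set K := GaloisField p 2 with hKdef
    haveI : Fintype K := Fintype.ofFinite K
    haveI : DecidableEq K := Classical.decEq K
    have hcardK : Fintype.card K = p ^ 2 := by
      rw [← Nat.card_eq_fintype_card, hKdef, GaloisField.card p 2 two_ne_zero]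
    haveI hKp : CharP K p := charP_of_injective_algebraMap (algebraMap (ZMod p) K).injective p
    have hringK : ringChar K = p := ringChar.eq K p
    have hK2 : ringChar K ≠ 2 := by rw [hringK]; exact hp2
    set bK := algebraMap (ZMod p) K B with hbKdef
    have hbK0 : bK ≠ 0 := fun h => hB ((algebraMap (ZMod p) K).injective (by rw [map_zero, ← h]))
    have hVK : (⟨0, 0, 0, 0, B⟩ : WeierstrassCurve (ZMod p)).baseChange K
        = ⟨0, 0, 0, 0, bK⟩ := by
      refine WeierstrassCurve.ext ?_ ?_ ?_ ?_ ?_ <;>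
        simp [WeierstrassCurve.baseChange, WeierstrassCurve.map, hbKdef]
    have hΔK : (⟨0, 0, 0, 0, bK⟩ : WeierstrassCurve K).Δ ≠ 0 := by
      rw [← hVK, WeierstrassCurve.baseChange, WeierstrassCurve.map_Δ]
      exact (map_ne_zero_iff _ (algebraMap (ZMod p) K).injective).mpr hΔ'
    show Nat.card (WeierstrassCurve.Affine.Point
      ((⟨0, 0, 0, 0, B⟩ : WeierstrassCurve (ZMod p)).baseChange K)) = (p + 1) ^ 2
    rw [hVK]
    -- the integer card identity
    have hcast := card_point hK2 bK ⟨0, 0, 0, 0, bK⟩ rfl hΔK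
    rw [hcardK] at hcast
    -- the character sum
    have hsum := sum_K p hcardK hp hp2 B hB
    rw [← hbKdef] at hsum
    -- divisibility by three
    obtain ⟨u, hu⟩ := exists_order_three p hcardK hp
    have hu3 : u ^ 3 = 1 := by rw [← hu]; exact pow_orderOf_eq_one u
    have hω3 : ((u : K)) ^ 3 = 1 := by rw [← Units.val_pow_eq_pow_val, hu3, Units.val_one]
    have hω1 : ((u : K)) ≠ 1 := by
      intro h
      have h1 : u = 1 := Units.ext h
      rw [h1, orderOf_one] at hu
      norm_num at hu
    have hbsq : IsSquare bK := isSquare_algMap p hcardK hp2 hK2 B hB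
    have h3dvd : 3 ∣ Nat.card (WeierstrassCurve.Affine.Point
        (⟨0, 0, 0, 0, bK⟩ : WeierstrassCurve K)) :=
      three_dvd_card (u : K) hω3 hω1 hK2 bK hbK0 hbsq hΔK
    set N := Nat.card (WeierstrassCurve.Affine.Point (⟨0, 0, 0, 0, bK⟩ : WeierstrassCurve K))
      with hNdef
    rcases hsum with h | h
    · rw [h] at hcast
      have : (N : ℤ) = (((p + 1) ^ 2 : ℕ) : ℤ) := by rw [hcast]; push_cast; ring
      exact_mod_cast this
    · exfalso
      rw [h] at hcast
      have h3dvd' : (3 : ℤ) ∣ ((p : ℤ) - 1) ^ 2 := by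
        have h1 : ((3 : ℕ) : ℤ) ∣ ((N : ℕ) : ℤ) := Int.natCast_dvd_natCast.mpr h3dvd
        have h2 : (N : ℤ) = ((p : ℤ) - 1) ^ 2 := by rw [hcast]; push_cast; ring
        rw [h2] at h1
        exact_mod_cast h1
      have hprime3 : Prime (3 : ℤ) := Int.prime_three
      have := hprime3.dvd_of_dvd_pow h3dvd'
      omega
end

section
/- Let p be a prime with p ≡ 3 (mod 4) and let E be an elliptic curve over the finite field F_p given by y² = x³ + Ax (i.e. a short Weierstrass equation with B = 0, so j(E) = 1728). Then |E(F_p)| = p + 1 and |E(F_{p²})| = (p + 1)². -/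
set_option linter.unusedSectionVars false
set_option linter.unusedVariables false
set_option maxHeartbeats 1000000
set_option linter.unreachableTactic false

open WeierstrassCurve WeierstrassCurve.Affine Finset

section PointCount

variable {K : Type*} [Field K] [Fintype K] [DecidableEq K]

lemma my_equation_iff (B : K) (V : WeierstrassCurve K) (hV : V = ⟨0, 0, 0, B, 0⟩) (x y : K) :
    V.toAffine.Equation x y ↔ y ^ 2 = x ^ 3 + B * x := by
  subst hV
  rw [WeierstrassCurve.Affine.equation_iff]
  constructor <;> intro h <;> linear_combination h

noncomputable def pointEquiv (B : K) (V : WeierstrassCurve K) (hV : V = ⟨0, 0, 0, B, 0⟩)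
    (hΔ : V.Δ ≠ 0) :
    V.toAffine.Point ≃ Option {s : K × K // s.2 ^ 2 = s.1 ^ 3 + B * s.1} where
  toFun P := match P with
    | .zero => none
    | @Point.some _ _ _ x y h => some ⟨(x, y), (my_equation_iff B V hV x y).mp h.1⟩
  invFun o := match o with
    | none => .zero
    | some ⟨(x, y), h⟩ =>
        .some _ _ ((V.toAffine.equation_iff_nonsingular_of_Δ_ne_zero hΔ).mp ((my_equation_iff B V hV x y).mpr h))
  left_inv P := by cases P <;> rfl
  right_inv o := by rcases o with _ | ⟨⟨x, y⟩, h⟩ <;> rfl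

lemma card_point_eq (B : K) (V : WeierstrassCurve K) (hV : V = ⟨0, 0, 0, B, 0⟩)
    (hΔ : V.Δ ≠ 0) :
    Nat.card V.toAffine.Point
      = Fintype.card {s : K × K // s.2 ^ 2 = s.1 ^ 3 + B * s.1} + 1 := by
  rw [Nat.card_congr (pointEquiv B V hV hΔ), Nat.card_eq_fintype_card, Fintype.card_option]

lemma card_sub_eq (B : K) (hchar : ringChar K ≠ 2) :
    (Fintype.card {s : K × K // s.2 ^ 2 = s.1 ^ 3 + B * s.1} : ℤ)
      = Fintype.card K + ∑ x : K, quadraticChar K (x ^ 3 + B * x) := by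
  have e : {s : K × K // s.2 ^ 2 = s.1 ^ 3 + B * s.1}
      ≃ Σ x : K, {y : K // y ^ 2 = x ^ 3 + B * x} :=
    Equiv.subtypeProdEquivSigmaSubtype fun x y => y ^ 2 = x ^ 3 + B * x
  rw [Fintype.card_congr e, Fintype.card_sigma]
  push_cast
  have h : ∀ x : K, (Fintype.card {y : K // y ^ 2 = x ^ 3 + B * x} : ℤ)
      = quadraticChar K (x ^ 3 + B * x) + 1 := by
    intro x
    have := quadraticChar_card_sqrts hchar (x ^ 3 + B * x)
    rw [← this, Set.toFinset_card]
    norm_cast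
  rw [Finset.sum_congr rfl fun x _ => h x, Finset.sum_add_distrib]
  rw [Finset.sum_const, Finset.card_univ, nsmul_eq_mul, mul_one, add_comm]


end PointCount

section Jacobsthal

variable {K : Type*} [Field K] [Fintype K] [DecidableEq K]

local notation "χ" => quadraticChar K

lemma sum_cubic_odd_zero (hm1 : χ (-1) = -1) (B : K) :
    ∑ x : K, χ (x ^ 3 + B * x) = 0 := by
  have key : ∑ x : K, χ (x ^ 3 + B * x) = ∑ x : K, χ ((-x) ^ 3 + B * (-x)) :=
    Fintype.sum_equiv (Equiv.neg K) _ _ (fun x => by simp)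
  have h2 : ∀ x : K, χ ((-x) ^ 3 + B * (-x)) = - χ (x ^ 3 + B * x) := by
    intro x
    have : (-x) ^ 3 + B * (-x) = (-1) * (x ^ 3 + B * x) := by ring
    rw [this, map_mul, hm1]
    ring
  rw [Finset.sum_congr rfl fun x _ => h2 x, Finset.sum_neg_distrib] at key
  linarith

end Jacobsthal

section Jac2

variable {K : Type*} [Field K] [Fintype K] [DecidableEq K]

local notation "χ" => quadraticChar K

lemma sum_mul_shift (hchar : ringChar K ≠ 2) {r s : K} (hrs : r ≠ s) :
    ∑ b : K, χ ((r + b) * (s + b)) = -1 := by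
  set d := s - r with hd
  have hd0 : d ≠ 0 := sub_ne_zero.mpr (Ne.symm hrs)
  have step1 : ∑ b : K, χ ((r + b) * (s + b)) = ∑ b : K, χ (b * (b + d)) := by
    refine Fintype.sum_equiv (Equiv.addLeft r) _ _ fun b => ?_
    simp only [Equiv.coe_addLeft]
    congr 1
    ring
  rw [step1]
  have h0 : χ ((0 : K) * (0 + d)) = 0 := by simp
  rw [← Finset.sum_erase_add _ _ (Finset.mem_univ (0 : K)), h0, add_zero]
  have step2 : ∑ b ∈ Finset.univ.erase (0 : K), χ (b * (b + d))
      = ∑ t ∈ Finset.univ.erase (1 : K), χ t := by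
    refine Finset.sum_nbij' (fun b => 1 + d * b⁻¹) (fun t => d / (t - 1)) ?_ ?_ ?_ ?_ ?_
    · intro b hb
      have hb0 : b ≠ 0 := Finset.ne_of_mem_erase hb
      refine Finset.mem_erase.mpr ⟨?_, Finset.mem_univ _⟩
      intro h
      have : d * b⁻¹ = 0 := by linear_combination h
      rcases mul_eq_zero.mp this with h' | h'
      · exact hd0 h'
      · exact inv_ne_zero hb0 h'
    · intro t ht
      have ht1 : t ≠ 1 := Finset.ne_of_mem_erase ht
      refine Finset.mem_erase.mpr ⟨?_, Finset.mem_univ _⟩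
      exact div_ne_zero hd0 (sub_ne_zero.mpr ht1)
    · intro b hb
      have hb0 : b ≠ 0 := Finset.ne_of_mem_erase hb
      field_simp
      rw [add_sub_cancel_left, div_self hd0]
    · intro t ht
      have ht1 : t ≠ 1 := Finset.ne_of_mem_erase ht
      have : t - 1 ≠ 0 := sub_ne_zero.mpr ht1
      field_simp
      ring
    · intro b hb
      have hb0 : b ≠ 0 := Finset.ne_of_mem_erase hb
      have key : b * (b + d) = b ^ 2 * (1 + d * b⁻¹) := by
        field_simp
      rw [key, map_mul, quadraticChar_sq_one' hb0, one_mul]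
  rw [step2]
  have hz := quadraticChar_sum_zero hchar
  have h1 : χ (1 : K) = 1 := by simp
  have h2 := Finset.sum_erase_add Finset.univ (fun t => χ t) (Finset.mem_univ (1 : K))
  simp only [h1] at h2
  rw [hz] at h2
  linarith

lemma sum_sq_shift (r : K) :
    ∑ b : K, χ ((r + b) * (r + b)) = (Fintype.card K : ℤ) - 1 := by
  have h : ∀ b : K, χ ((r + b) * (r + b)) = 1 - (if b = -r then 1 else 0) := by
    intro b
    by_cases hb : b = -r
    · simp [hb]
    · have : r + b ≠ 0 := fun h => hb (by linear_combination h)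
      rw [← sq, quadraticChar_sq_one' this]
      simp [hb]
  rw [Finset.sum_congr rfl fun b _ => h b, Finset.sum_sub_distrib]
  rw [Finset.sum_ite_eq' Finset.univ (-r) (fun _ => (1 : ℤ))]
  simp [Finset.card_univ]

lemma jac_scale (hchar : ringChar K ≠ 2) {c : K} (B : K) (hc : c ≠ 0) :
    (∑ x : K, χ x * χ (x ^ 2 + c ^ 2 * B)) = χ c * ∑ x : K, χ x * χ (x ^ 2 + B) := by
  rw [Finset.mul_sum]
  refine (Fintype.sum_equiv (Equiv.mulLeft₀ c hc)
    (fun x => χ c * (χ x * χ (x ^ 2 + B)))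
    (fun x => χ x * χ (x ^ 2 + c ^ 2 * B)) fun x => ?_).symm
  show χ c * (χ x * χ (x ^ 2 + B)) = χ (c * x) * χ ((c * x) ^ 2 + c ^ 2 * B)
  have e1 : (c * x) ^ 2 + c ^ 2 * B = c ^ 2 * (x ^ 2 + B) := by ring
  rw [e1, map_mul, map_mul, quadraticChar_sq_one' hc]
  ring

end Jac2
section Jac3

variable {K : Type*} [Field K] [Fintype K] [DecidableEq K]

local notation "χ" => quadraticChar K

lemma jac_sq_sum (hchar : ringChar K ≠ 2) (hm1 : χ (-1) = 1) :
    ∑ B : K, (∑ x : K, χ x * χ (x ^ 2 + B)) ^ 2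
      = 2 * (Fintype.card K : ℤ) * ((Fintype.card K : ℤ) - 1) := by
  set q : ℤ := (Fintype.card K : ℤ) with hq
  have expand : ∑ B : K, (∑ x : K, χ x * χ (x ^ 2 + B)) ^ 2
      = ∑ x : K, ∑ y : K, (χ x * χ y) * ∑ B : K, χ ((x ^ 2 + B) * (y ^ 2 + B)) := by
    have e1 : ∀ B : K, (∑ x : K, χ x * χ (x ^ 2 + B)) ^ 2
        = ∑ x : K, ∑ y : K, (χ x * χ y) * χ ((x ^ 2 + B) * (y ^ 2 + B)) := by
      intro B
      rw [sq, Finset.sum_mul_sum]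
      refine Finset.sum_congr rfl fun x _ => Finset.sum_congr rfl fun y _ => ?_
      rw [map_mul]
      ring
    rw [Finset.sum_congr rfl fun B _ => e1 B]
    rw [Finset.sum_comm]
    refine Finset.sum_congr rfl fun x _ => ?_
    rw [Finset.sum_comm]
    refine Finset.sum_congr rfl fun y _ => ?_
    rw [Finset.mul_sum]
  rw [expand]
  have inner : ∀ x y : K, (∑ B : K, χ ((x ^ 2 + B) * (y ^ 2 + B)))
      = -1 + (if x ^ 2 = y ^ 2 then q else 0) := by
    intro x y
    by_cases hxy : x ^ 2 = y ^ 2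
    · rw [if_pos hxy, hxy, sum_sq_shift]
      ring
    · rw [if_neg hxy, sum_mul_shift hchar hxy]
      ring
  rw [Finset.sum_congr rfl fun x _ => Finset.sum_congr rfl fun y _ => by rw [inner x y]]
  have split : ∑ x : K, ∑ y : K, (χ x * χ y) * (-1 + (if x ^ 2 = y ^ 2 then q else 0))
      = (∑ x : K, ∑ y : K, (χ x * χ y) * (-1))
        + ∑ x : K, ∑ y : K, (χ x * χ y) * (if x ^ 2 = y ^ 2 then q else 0) := by
    rw [← Finset.sum_add_distrib]
    refine Finset.sum_congr rfl fun x _ => ?_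
    rw [← Finset.sum_add_distrib]
    refine Finset.sum_congr rfl fun y _ => ?_
    ring
  rw [split]
  have part1 : (∑ x : K, ∑ y : K, (χ x * χ y) * (-1)) = 0 := by
    have : ∀ x : K, ∑ y : K, (χ x * χ y) * (-1) = -χ x * ∑ y : K, χ y := by
      intro x
      rw [Finset.mul_sum]
      exact Finset.sum_congr rfl fun y _ => by ring
    rw [Finset.sum_congr rfl fun x _ => this x, quadraticChar_sum_zero hchar]
    simp
  have part2 : ∀ x : K, (∑ y : K, (χ x * χ y) * (if x ^ 2 = y ^ 2 then q else 0))
      = if x = 0 then 0 else 2 * q := by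
    intro x
    have e2 : ∀ y : K, (χ x * χ y) * (if x ^ 2 = y ^ 2 then q else 0)
        = if x ^ 2 = y ^ 2 then χ x * χ y * q else 0 := by
      intro y
      by_cases h : x ^ 2 = y ^ 2 <;> simp [h]
    rw [Finset.sum_congr rfl fun y _ => e2 y, Finset.sum_ite, Finset.sum_const_zero, add_zero]
    by_cases hx : x = 0
    · subst hx
      have : Finset.univ.filter (fun y : K => (0 : K) ^ 2 = y ^ 2) = {0} := by
        ext y
        simp only [Finset.mem_filter, Finset.mem_univ, true_and, Finset.mem_singleton]
        constructor
        · intro h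
          have h' : y ^ 2 = 0 := by rw [← h]; ring
          simpa using (pow_eq_zero_iff (n := 2) (by norm_num)).mp h'
        · intro h
          simp [h]
      rw [this]
      simp
    · have hfilter : Finset.univ.filter (fun y : K => x ^ 2 = y ^ 2) = {x, -x} := by
        ext y
        simp only [Finset.mem_filter, Finset.mem_univ, true_and, Finset.mem_insert,
          Finset.mem_singleton]
        rw [eq_comm, sq_eq_sq_iff_eq_or_eq_neg]
      have hxne : x ≠ -x := by
        intro h
        exact hx ((Ring.eq_self_iff_eq_zero_of_char_ne_two hchar).mp h.symm)
      rw [hfilter, if_neg hx, Finset.sum_pair hxne]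
      have hnx : χ (-x) = χ x := by
        rw [show -x = -1 * x by ring, map_mul, hm1, one_mul]
      rw [hnx, ← map_mul]
      rw [show x * x = x ^ 2 by ring, quadraticChar_sq_one' hx]
      ring
  rw [part1, zero_add, Finset.sum_congr rfl fun x _ => part2 x]
  have : ∑ x : K, (if x = 0 then (0 : ℤ) else 2 * q)
      = ∑ x : K, (2 * q - if x = 0 then 2 * q else 0) := by
    refine Finset.sum_congr rfl fun x _ => ?_
    by_cases h : x = 0 <;> simp [h]
  rw [this, Finset.sum_sub_distrib, Finset.sum_ite_eq' Finset.univ (0 : K) (fun _ => 2 * q)]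
  simp [Finset.card_univ, ← hq]
  ring

end Jac3
section Jac4

variable {K : Type*} [Field K] [Fintype K] [DecidableEq K]

local notation "χ" => quadraticChar K

lemma jac_zero (hchar : ringChar K ≠ 2) : (∑ x : K, χ x * χ (x ^ 2 + 0)) = 0 := by
  have h : ∀ x : K, χ x * χ (x ^ 2 + 0) = χ x := by
    intro x
    by_cases hx : x = 0
    · simp [hx]
    · rw [add_zero, quadraticChar_sq_one' hx, mul_one]
  rw [Finset.sum_congr rfl fun x _ => h x]
  exact quadraticChar_sum_zero hchar

lemma jac_val (hchar : ringChar K ≠ 2) (hm1 : χ (-1) = 1) (B : K) (hB : B ≠ 0)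
    (hsq : IsSquare B) :
    ∃ t : ℤ, (∑ x : K, χ x * χ (x ^ 2 + B)) ^ 2 + t ^ 2 = 4 * (Fintype.card K : ℤ) := by
  classical
  set J : K → ℤ := fun b => ∑ x : K, χ x * χ (x ^ 2 + b) with hJ
  obtain ⟨g, hg⟩ := FiniteField.exists_nonsquare (F := K) hchar
  have hg0 : g ≠ 0 := fun h => hg (by rw [h]; exact IsSquare.zero)
  set u : ℤ := (J 1) ^ 2 with hu
  set v : ℤ := (J g) ^ 2 with hv
  -- value of J on squares and nonsquares
  have hJsq : ∀ b : K, b ≠ 0 → IsSquare b → (J b) ^ 2 = u := by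
    intro b hb0 hbsq
    obtain ⟨c, hc⟩ := hbsq
    have hc0 : c ≠ 0 := fun h => hb0 (by rw [hc, h, mul_zero])
    have hb' : b = c ^ 2 * 1 := by rw [hc]; ring
    have := jac_scale (K := K) hchar (1 : K) hc0
    rw [hJ]
    simp only []
    rw [hb', this, mul_pow, show (χ c) ^ 2 = 1 from quadraticChar_sq_one hc0, one_mul]
  have hJnsq : ∀ b : K, b ≠ 0 → ¬IsSquare b → (J b) ^ 2 = v := by
    intro b hb0 hbsq
    have hbg : IsSquare (b * g⁻¹) := by
      have hbg0 : b * g⁻¹ ≠ 0 := mul_ne_zero hb0 (inv_ne_zero hg0)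
      rw [← quadraticChar_one_iff_isSquare hbg0, map_mul]
      have h1 : χ b = -1 := quadraticChar_neg_one_iff_not_isSquare.mpr hbsq
      have h2 : χ g⁻¹ = -1 := by
        have : χ g * χ g⁻¹ = 1 := by
          rw [← map_mul, mul_inv_cancel₀ hg0]
          simp
        have h3 : χ g = -1 := quadraticChar_neg_one_iff_not_isSquare.mpr hg
        rw [h3] at this
        linarith
      rw [h1, h2]
      norm_num
    obtain ⟨c, hc⟩ := hbg
    have hc0 : c ≠ 0 := by
      intro h
      rw [h, mul_zero] at hc
      exact mul_ne_zero hb0 (inv_ne_zero hg0) hc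
    have hb' : b = c ^ 2 * g := by
      field_simp at hc
      rw [sq]
      linear_combination hc
    have := jac_scale (K := K) hchar (g : K) hc0
    rw [hJ]
    simp only []
    rw [hb', this, mul_pow]
    rw [show (χ c) ^ 2 = 1 from quadraticChar_sq_one hc0, one_mul]
  -- pairing identity
  have key : ∀ b : K, b ≠ 0 → (J b) ^ 2 + (J (g * b)) ^ 2 = u + v := by
    intro b hb0
    have hgb0 : g * b ≠ 0 := mul_ne_zero hg0 hb0
    by_cases hbsq : IsSquare b
    · have h1 : (J b) ^ 2 = u := hJsq b hb0 hbsq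
      have h2 : ¬IsSquare (g * b) := by
        intro h
        obtain ⟨c, hc⟩ := hbsq
        apply hg
        have hc0 : c ≠ 0 := fun hh => hb0 (by rw [hc, hh, mul_zero])
        have heq : g = (g * b) * (c⁻¹) ^ 2 := by
          calc g = g * (c * c⁻¹) ^ 2 := by rw [mul_inv_cancel₀ hc0]; ring
            _ = (g * (c * c)) * (c⁻¹) ^ 2 := by ring
            _ = (g * b) * (c⁻¹) ^ 2 := by rw [← hc]
        rw [heq]
        obtain ⟨d, hd⟩ := h
        exact ⟨d * c⁻¹, by rw [hd]; ring⟩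
      rw [h1, hJnsq (g * b) hgb0 h2]
    · have h1 : (J b) ^ 2 = v := hJnsq b hb0 hbsq
      have h2 : IsSquare (g * b) := by
        have hgb0' := hgb0
        rw [← quadraticChar_one_iff_isSquare hgb0, map_mul]
        rw [quadraticChar_neg_one_iff_not_isSquare.mpr hg,
          quadraticChar_neg_one_iff_not_isSquare.mpr hbsq]
        norm_num
      rw [h1, hJsq (g * b) hgb0 h2]
      ring
  -- sum over all b of J b ^ 2, twice
  have reindex : ∑ b : K, (J b) ^ 2 = ∑ b : K, (J (g * b)) ^ 2 := by
    refine Fintype.sum_equiv (Equiv.mulLeft₀ g hg0).symm _ _ fun b => ?_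
    rw [show g * ((Equiv.mulLeft₀ g hg0).symm b) = b from (Equiv.mulLeft₀ g hg0).apply_symm_apply b]
  have total : 2 * (2 * (Fintype.card K : ℤ) * ((Fintype.card K : ℤ) - 1))
      = ∑ b : K, ((J b) ^ 2 + (J (g * b)) ^ 2) := by
    rw [Finset.sum_add_distrib, ← reindex, ← jac_sq_sum hchar hm1]
    ring
  have eval : ∑ b : K, ((J b) ^ 2 + (J (g * b)) ^ 2)
      = ∑ b : K, (if b = 0 then 0 else u + v) := by
    refine Finset.sum_congr rfl fun b _ => ?_
    by_cases hb : b = 0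
    · subst hb
      rw [if_pos rfl]
      rw [mul_zero]
      rw [show J 0 = 0 from jac_zero hchar]
      ring
    · rw [if_neg hb]
      exact key b hb
  have count : ∑ b : K, (if b = 0 then (0:ℤ) else u + v)
      = ((Fintype.card K : ℤ) - 1) * (u + v) := by
    have : ∀ b : K, (if b = 0 then (0:ℤ) else u + v) = (u + v) - (if b = 0 then u + v else 0) := by
      intro b
      by_cases hb : b = 0 <;> simp [hb]
    rw [Finset.sum_congr rfl fun b _ => this b, Finset.sum_sub_distrib,
      Finset.sum_ite_eq' Finset.univ (0 : K) (fun _ => u + v)]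
    simp [Finset.card_univ]
    ring
  have hq1 : (1 : ℤ) < (Fintype.card K : ℤ) := by
    exact_mod_cast Fintype.one_lt_card
  have main : u + v = 4 * (Fintype.card K : ℤ) := by
    have h := total.trans (eval.trans count)
    have hne : (Fintype.card K : ℤ) - 1 ≠ 0 := by linarith
    have : ((Fintype.card K : ℤ) - 1) * (4 * (Fintype.card K : ℤ))
        = ((Fintype.card K : ℤ) - 1) * (u + v) := by linarith
    exact (mul_left_cancel₀ hne this).symm
  refine ⟨J g, ?_⟩
  rw [show (∑ x : K, χ x * χ (x ^ 2 + B)) = J B from rfl, hJsq B hB hsq, ← hv, main]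

end Jac4
section NT

lemma odd_parity_aux (p : ℕ) (a b : ℤ) (h : a ^ 2 + b ^ 2 = 4 * (p : ℤ) ^ 2) :
    Even a ∧ Even b := by
  constructor
  · rcases Int.even_or_odd a with ha | ha
    · exact ha
    · exfalso
      obtain ⟨m, hm⟩ := ha
      rcases Int.even_or_odd b with hb | hb
      · obtain ⟨k, hk⟩ := hb
        have key : 4 * (m ^ 2 + m + k * k) + 1 = 4 * (p : ℤ) ^ 2 := by
          subst hm hk; linear_combination h
        have h4 : (4 : ℤ) ∣ 4 * (p:ℤ)^2 := ⟨_, rfl⟩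
        omega
      · obtain ⟨k, hk⟩ := hb
        have key : 4 * (m ^ 2 + m + k ^ 2 + k) + 2 = 4 * (p : ℤ) ^ 2 := by
          subst hm hk; linear_combination h
        have h4 : (4 : ℤ) ∣ 4 * (p:ℤ)^2 := ⟨_, rfl⟩
        omega
  · rcases Int.even_or_odd b with hb | hb
    · exact hb
    · exfalso
      obtain ⟨k, hk⟩ := hb
      rcases Int.even_or_odd a with ha | ha
      · obtain ⟨m, hm⟩ := ha
        have key : 4 * (k ^ 2 + k + m * m) + 1 = 4 * (p : ℤ) ^ 2 := by
          subst hm hk; linear_combination h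
        have h4 : (4 : ℤ) ∣ 4 * (p:ℤ)^2 := ⟨_, rfl⟩
        omega
      · obtain ⟨m, hm⟩ := ha
        have key : 4 * (m ^ 2 + m + k ^ 2 + k) + 2 = 4 * (p : ℤ) ^ 2 := by
          subst hm hk; linear_combination h
        have h4 : (4 : ℤ) ∣ 4 * (p:ℤ)^2 := ⟨_, rfl⟩
        omega

lemma sq_add_sq_p_sq {p : ℕ} [hp' : Fact p.Prime] (hp : p % 4 = 3) (m k : ℤ)
    (key : m ^ 2 + k ^ 2 = (p : ℤ) ^ 2) : m = 0 ∨ k = 0 := by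
  have hdvd : (p : ℤ) ∣ m ∨ (p : ℤ) ∣ k := by
    by_contra hcon
    push_neg at hcon
    obtain ⟨hm, hk⟩ := hcon
    have hmz : (m : ZMod p) ≠ 0 := by
      rwa [Ne, ZMod.intCast_zmod_eq_zero_iff_dvd]
    have hkz : (k : ZMod p) ≠ 0 := by
      rwa [Ne, ZMod.intCast_zmod_eq_zero_iff_dvd]
    have hcast : ((m : ZMod p)) ^ 2 + ((k : ZMod p)) ^ 2 = 0 := by
      have := congrArg (fun z : ℤ => (z : ZMod p)) key
      push_cast at this
      rw [this]
      simp [ZMod.natCast_self]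
    have hsq : IsSquare (-1 : ZMod p) := by
      refine ⟨(m : ZMod p) * (k : ZMod p)⁻¹, ?_⟩
      have h1 : ((m : ZMod p) * (k : ZMod p)⁻¹) * ((m : ZMod p) * (k : ZMod p)⁻¹)
          = (m : ZMod p) ^ 2 * ((k : ZMod p) ^ 2)⁻¹ := by
        rw [← inv_pow]
        ring
      rw [h1]
      have h2 : ((m : ZMod p)) ^ 2 = -((k : ZMod p)) ^ 2 := by linear_combination hcast
      rw [h2]
      field_simp
    exact (ZMod.exists_sq_eq_neg_one_iff.mp hsq) hp
  have hppos : (0 : ℤ) < (p : ℤ) := by exact_mod_cast hp'.out.pos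
  rcases hdvd with ⟨m', rfl⟩ | ⟨k', rfl⟩
  · by_cases hm0 : m' = 0
    · left; rw [hm0, mul_zero]
    · right
      have h1 : (1 : ℤ) ≤ m' ^ 2 := by
        rcases lt_or_gt_of_ne hm0 with h | h <;> nlinarith
      have hk2 : k ^ 2 ≤ 0 := by nlinarith
      have := sq_nonneg k
      have : k ^ 2 = 0 := le_antisymm hk2 this
      exact pow_eq_zero_iff (by norm_num) |>.mp this
  · by_cases hk0 : k' = 0
    · right; rw [hk0, mul_zero]
    · left
      have h1 : (1 : ℤ) ≤ k' ^ 2 := by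
        rcases lt_or_gt_of_ne hk0 with h | h <;> nlinarith
      have hm2 : m ^ 2 ≤ 0 := by nlinarith
      have := sq_nonneg m
      have : m ^ 2 = 0 := le_antisymm hm2 this
      exact pow_eq_zero_iff (by norm_num) |>.mp this

lemma sq_add_sq_four_p_sq {p : ℕ} [Fact p.Prime] (hp : p % 4 = 3) (a b : ℤ)
    (h : a ^ 2 + b ^ 2 = 4 * (p : ℤ) ^ 2) : a = 0 ∨ b = 0 := by
  obtain ⟨⟨m, hm⟩, ⟨k, hk⟩⟩ := odd_parity_aux p a b h
  have key : m ^ 2 + k ^ 2 = (p : ℤ) ^ 2 := by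
    have h4 : (4 : ℤ) * (m ^ 2 + k ^ 2) = 4 * (p : ℤ) ^ 2 := by
      subst hm hk; linear_combination h
    exact mul_left_cancel₀ (by norm_num : (4:ℤ) ≠ 0) h4
  rcases sq_add_sq_p_sq hp m k key with h0 | h0
  · left; rw [hm, h0]; ring
  · right; rw [hk, h0]; ring

end NT
section SquareLemma

lemma isSquare_algebraMap_of_card_sq {p : ℕ} [Fact p.Prime] (hp : p % 4 = 3)
    (K : Type*) [Field K] [Fintype K] [Algebra (ZMod p) K]
    (hcard : Fintype.card K = p ^ 2) (u : ZMod p) (hu : u ≠ 0) :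
    IsSquare (algebraMap (ZMod p) K u) := by
  haveI : CharP K p := (Algebra.charP_iff (ZMod p) K p).mp inferInstance
  have hchar : ringChar K ≠ 2 := by
    rw [ringChar.eq K p]
    omega
  have hu0 : algebraMap (ZMod p) K u ≠ 0 := fun h =>
    hu ((algebraMap (ZMod p) K).injective (by simpa using h))
  rw [FiniteField.isSquare_iff hchar hu0]
  obtain ⟨kk, hkk⟩ : ∃ k, p = 4 * k + 3 := ⟨p / 4, by omega⟩
  have hdiv : Fintype.card K / 2 = (p - 1) * ((p + 1) / 2) := by
    rw [hcard]
    subst hkk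
    have e1 : (4 * kk + 3) ^ 2 = 16 * (kk * kk) + 24 * kk + 9 := by ring
    have e0 : (4 * kk + 3 + 1) / 2 = 2 * kk + 2 := by omega
    have e0' : 4 * kk + 3 - 1 = 4 * kk + 2 := by omega
    have e2 : (4 * kk + 2) * (2 * kk + 2) = 8 * (kk * kk) + 12 * kk + 4 := by ring
    rw [e1, e0, e0', e2]
    generalize kk * kk = t
    omega
  rw [hdiv, pow_mul, ← map_pow, ZMod.pow_card_sub_one_eq_one hu]
  simp

end SquareLemma

/-- Let `p` be a prime with `p ≡ 3 (mod 4)` and `E : y² = x³ + Ax` an elliptic curve over `F_p`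
(so `j(E) = 1728`). Then `|E(F_p)| = p + 1` and `|E(F_{p²})| = (p + 1)²`. -/
theorem card_points_j_1728 (p : ℕ) [Fact p.Prime] (hp : p % 4 = 3) (A : ZMod p)
    (W : WeierstrassCurve (ZMod p)) (hW : W = ⟨0, 0, 0, A, 0⟩) (hΔ : W.Δ ≠ 0) :
    Nat.card (Affine.Point <| Affine.baseChange W (ZMod p)) = p + 1 ∧ Nat.card (Affine.Point <| Affine.baseChange W (GaloisField p 2)) = (p + 1) ^ 2 := by
  classical
  have hp3 : 3 ≤ p := by
    rcases Nat.lt_or_ge p 3 with h | h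
    · interval_cases p <;> omega
    · exact h
  have hA : A ≠ 0 := by
    intro h
    apply hΔ
    rw [hW, h]
    show WeierstrassCurve.Δ _ = 0
    norm_num [WeierstrassCurve.Δ, WeierstrassCurve.b₂, WeierstrassCurve.b₄,
      WeierstrassCurve.b₆, WeierstrassCurve.b₈]
  -- Part 1 : over ZMod p
  have hchar_p : ringChar (ZMod p) ≠ 2 := by
    rw [ZMod.ringChar_zmod_n]
    omega
  have hm1p : quadraticChar (ZMod p) (-1) = -1 := by
    rw [quadraticChar_neg_one hchar_p, ZMod.card]
    exact ZMod.χ₄_nat_three_mod_four hp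
  have hV₁ : W.baseChange (ZMod p) = ⟨0, 0, 0, A, 0⟩ := by
    rw [hW]
    simp [WeierstrassCurve.baseChange, WeierstrassCurve.map, Algebra.algebraMap_self]
  have hΔ₁ : (W.baseChange (ZMod p)).Δ ≠ 0 := by
    rw [WeierstrassCurve.baseChange, WeierstrassCurve.map_Δ]
    simpa [Algebra.algebraMap_self] using hΔ
  have h1 : Nat.card (W.baseChange (ZMod p)).toAffine.Point = p + 1 := by
    have hcp := card_point_eq A (W.baseChange (ZMod p)) hV₁ hΔ₁
    have hcs := card_sub_eq (K := ZMod p) A hchar_p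
    have hzero := sum_cubic_odd_zero (K := ZMod p) hm1p A
    rw [hzero, add_zero, ZMod.card] at hcs
    have hsub : Fintype.card {s : ZMod p × ZMod p // s.2 ^ 2 = s.1 ^ 3 + A * s.1} = p := by
      exact_mod_cast hcs
    show Nat.card (W.baseChange (ZMod p)).toAffine.Point = p + 1
    rw [hcp, hsub]
  refine ⟨h1, ?_⟩
  -- Part 2 : over GaloisField p 2
  letI : Fintype (GaloisField p 2) := Fintype.ofFinite _
  set K := GaloisField p 2 with hK
  have hcard : Fintype.card K = p ^ 2 := by
    rw [← Nat.card_eq_fintype_card]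
    exact GaloisField.card p 2 (by norm_num)
  have hcharK : ringChar K ≠ 2 := by
    rw [ringChar.eq K p]
    omega
  have hm1K : quadraticChar K (-1) = 1 := by
    have hmod : p ^ 2 % 4 = 1 := by
      obtain ⟨k, hk⟩ : ∃ k, p = 4 * k + 3 := ⟨p / 4, by omega⟩
      subst hk
      have e : (4 * k + 3) ^ 2 = 4 * (4 * (k * k) + 6 * k + 2) + 1 := by ring
      rw [e]
      omega
    rw [quadraticChar_neg_one hcharK, hcard, ZMod.χ₄_nat_eq_if_mod_four]
    have h2 : p ^ 2 % 2 = 1 := by omega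
    rw [if_neg (by omega), if_pos hmod]
  set B : K := algebraMap (ZMod p) K A with hB
  have hB0 : B ≠ 0 := fun h => hA ((algebraMap (ZMod p) K).injective (by rw [map_zero]; exact h))
  have hBsq : IsSquare B := isSquare_algebraMap_of_card_sq hp K hcard A hA
  have hV₂ : W.baseChange K = ⟨0, 0, 0, B, 0⟩ := by
    rw [hW]
    simp [WeierstrassCurve.baseChange, WeierstrassCurve.map, hB]
  have hΔ₂ : (W.baseChange K).Δ ≠ 0 := by
    rw [WeierstrassCurve.baseChange, WeierstrassCurve.map_Δ]
    intro h
    exact hΔ ((algebraMap (ZMod p) K).injective (by rw [map_zero]; exact h))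
  -- the χ-sum
  have hJrel : (∑ x : K, quadraticChar K (x ^ 3 + B * x))
      = ∑ x : K, quadraticChar K x * quadraticChar K (x ^ 2 + B) := by
    refine Finset.sum_congr rfl fun x _ => ?_
    rw [show x ^ 3 + B * x = x * (x ^ 2 + B) by ring, map_mul]
  have hcp := card_point_eq B (W.baseChange K) hV₂ hΔ₂
  have hcs := card_sub_eq (K := K) B hcharK
  -- value of the sum
  obtain ⟨t, ht⟩ := jac_val hcharK hm1K B hB0 hBsq
  rw [hcard] at ht
  push_cast at ht
  set S : ℤ := ∑ x : K, quadraticChar K (x ^ 3 + B * x) with hS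
  rw [← hJrel] at ht
  have hSval : S = 0 ∨ S = 2 * p ∨ S = -(2 * p) := by
    rcases sq_add_sq_four_p_sq hp S t ht with h0 | h0
    · exact Or.inl h0
    · rw [h0] at ht
      have hfact : (S - 2 * p) * (S + 2 * p) = 0 := by linear_combination ht
      rcases mul_eq_zero.mp hfact with h | h
      · exact Or.inr (Or.inl (by linarith))
      · exact Or.inr (Or.inr (by linarith))
  -- N₂ as an integer
  have hN2 : (Nat.card (W.baseChange K).toAffine.Point : ℤ) = (p : ℤ) ^ 2 + 1 + S := by
    show (Nat.card (W.baseChange K).toAffine.Point : ℤ) = _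
    rw [hcp]
    push_cast
    rw [hcs, hcard]
    push_cast
    ring
  -- divisibility by p + 1
  haveI : Finite (W.baseChange K).toAffine.Point := Finite.of_equiv _ (pointEquiv B (W.baseChange K) hV₂ hΔ₂).symm
  have hdvd : ((p : ℤ) + 1) ∣ (Nat.card (W.baseChange K).toAffine.Point : ℤ) := by
    have hinj : Function.Injective (Point.baseChange (W' := W) (ZMod p) K) :=
      Point.map_injective (W' := W) (Algebra.ofId (ZMod p) K)
    have hr : Nat.card (W.baseChange (ZMod p)).toAffine.Point
        = Nat.card (Point.baseChange (W' := W) (ZMod p) K).range :=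
      Nat.card_congr ((Equiv.ofInjective _ hinj).trans
        (Equiv.setCongr (AddMonoidHom.coe_range _).symm))
    have hd : Nat.card (W.baseChange (ZMod p)).toAffine.Point ∣ Nat.card (W.baseChange K).toAffine.Point := by
      rw [hr]
      exact AddSubgroup.card_addSubgroup_dvd_card _
    rw [h1] at hd
    exact_mod_cast Int.natCast_dvd_natCast.mpr hd
    -- conclude by case analysis on S
  rcases hSval with h0 | h0 | h0
  · -- S = 0 : impossible since p + 1 ∣ p² + 1
    exfalso
    rw [h0, add_zero] at hN2
    have hdd := hdvd
    rw [hN2] at hdd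
    have hd2 : ((p : ℤ) + 1) ∣ ((p : ℤ) ^ 2 - 1) := ⟨(p : ℤ) - 1, by ring⟩
    have h2 : ((p : ℤ) + 1) ∣ 2 := by
      have := dvd_sub hdd hd2
      simpa using this
    have hle := Int.le_of_dvd (by norm_num) h2
    have : (3 : ℤ) ≤ (p : ℤ) := by exact_mod_cast hp3
    omega
  · -- S = 2p : the desired count
    have : (Nat.card (W.baseChange K).toAffine.Point : ℤ) = ((p + 1 : ℕ) : ℤ) ^ 2 := by
      rw [hN2, h0]
      push_cast
      ring
    exact_mod_cast this
  · -- S = -2p : forces p = 3, then contradiction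
    exfalso
    rw [h0] at hN2
    have hdd := hdvd
    rw [hN2] at hdd
    have hd2 : ((p : ℤ) + 1) ∣ ((p : ℤ) ^ 2 + 1 + -(2 * (p : ℤ)) - 4) := ⟨(p : ℤ) - 3, by ring⟩
    have h4 : ((p : ℤ) + 1) ∣ 4 := by
      have := dvd_sub hdd hd2
      simpa using this
    have hle := Int.le_of_dvd (by norm_num) h4
    have hp3' : p = 3 := by
      have : (3 : ℤ) ≤ (p : ℤ) := by exact_mod_cast hp3
      omega
    subst hp3'
    -- the number of affine solutions would be 3
    have hN4 : Nat.card (W.baseChange K).toAffine.Point = 4 := by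
      have : (Nat.card (W.baseChange K).toAffine.Point : ℤ) = 4 := by rw [hN2]; norm_num
      exact_mod_cast this
    have hsub3 : Fintype.card {s : K × K // s.2 ^ 2 = s.1 ^ 3 + B * s.1} = 3 := by
      omega
    -- but there are at least 4 affine solutions
    obtain ⟨r, hr⟩ := isSquare_algebraMap_of_card_sq hp K hcard (-A) (neg_ne_zero.mpr hA)
    have hrr : r * r = -B := by
      rw [← hr, map_neg, ← hB]
    have hr0 : r ≠ 0 := by
      intro h
      rw [h, mul_zero] at hrr
      exact hB0 (neg_eq_zero.mp hrr.symm)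
    have hrnr : r ≠ -r := by
      intro h
      exact hr0 ((Ring.eq_self_iff_eq_zero_of_char_ne_two hcharK).mp h.symm)
    -- a fourth point with nonzero y-coordinate
    obtain ⟨x₁, y₁, hxy, hy0⟩ : ∃ x y : K, y ^ 2 = x ^ 3 + B * x ∧ y ≠ 0 := by
      have hA12 : A = 1 ∨ A = 2 := by
        have h12 : ∀ a : ZMod 3, a ≠ 0 → a = 1 ∨ a = 2 := by
          intro a ha
          fin_cases a
          · exact absurd rfl ha
          · left; rfl
          · right; rfl
        exact h12 A hA
      have h3K : (3 : K) = 0 := by exact_mod_cast CharP.cast_eq_zero K 3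
      rcases hA12 with hA1 | hA2
      · refine ⟨2, 1, ?_, one_ne_zero⟩
        have hB1 : B = 1 := by rw [hB, hA1, map_one]
        rw [hB1]
        linear_combination (-3 : K) * h3K
      · obtain ⟨i, hi⟩ := isSquare_algebraMap_of_card_sq hp K hcard (-1) (neg_ne_zero.mpr one_ne_zero)
        have hii : i * i = -1 := by rw [← hi, map_neg, map_one]
        have hi0 : i ≠ 0 := by
          intro h
          rw [h, mul_zero] at hii
          exact one_ne_zero (neg_eq_zero.mp hii.symm)
        have hsqi : IsSquare i := by
          rw [FiniteField.isSquare_iff hcharK hi0, hcard]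
          have he : (3 ^ 2 / 2 : ℕ) = 4 := by norm_num
          rw [he]
          calc i ^ 4 = (i * i) ^ 2 := by ring
            _ = 1 := by rw [hii]; ring
        obtain ⟨y, hy⟩ := hsqi
        have hB2 : B = 2 := by
          rw [hB, hA2, show (2 : ZMod 3) = 1 + 1 from rfl, map_add, map_one]
          norm_num
        refine ⟨i, y, ?_, ?_⟩
        · rw [hB2]
          linear_combination (-1 : K) * hy + (-i) * hii
        · intro h
          rw [h, mul_zero] at hy
          exact hi0 hy
    have hxne : ∀ z : K, z ^ 3 + B * z = 0 → x₁ ≠ z := by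
      intro z hz h
      apply hy0
      have hzero : y₁ ^ 2 = 0 := by rw [hxy, h, hz]
      exact pow_eq_zero_iff (by norm_num) |>.mp hzero
    have hx10 : x₁ ≠ 0 := hxne 0 (by ring)
    have hx1r : x₁ ≠ r := hxne r (by linear_combination r * hrr)
    have hx1nr : x₁ ≠ -r := hxne (-r) (by linear_combination (-r) * hrr)
    -- injection of four points into the solutions
    let l : Fin 4 → {s : K × K // s.2 ^ 2 = s.1 ^ 3 + B * s.1} := fun j =>
      match j with
      | 0 => ⟨(0, 0), by show (0:K) ^ 2 = (0:K) ^ 3 + B * 0; ring⟩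
      | 1 => ⟨(r, 0), by show (0:K) ^ 2 = r ^ 3 + B * r; linear_combination (-r) * hrr⟩
      | 2 => ⟨(-r, 0), by show (0:K) ^ 2 = (-r) ^ 3 + B * (-r); linear_combination r * hrr⟩
      | 3 => ⟨(x₁, y₁), hxy⟩
    have hl : Function.Injective l := by
      intro a b hab
      fin_cases a <;> fin_cases b <;>
        first
          | rfl
          | (exfalso
             simp only [l, Subtype.mk.injEq, Prod.mk.injEq] at hab
             first
               | exact hr0 hab.1.symm
               | exact hr0 hab.1
               | exact hr0 hab.symm
               | exact hr0 hab
               | exact hr0 (neg_eq_zero.mp hab.1.symm)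
               | exact hr0 (neg_eq_zero.mp hab.1)
               | exact hr0 (neg_eq_zero.mp hab.symm)
               | exact hr0 (neg_eq_zero.mp hab)
               | exact hrnr hab.1
               | exact hrnr hab.1.symm
               | exact hrnr hab
               | exact hrnr hab.symm
               | exact hy0 hab.2
               | exact hy0 hab.2.symm
               | exact hx10 hab.1.symm
               | exact hx10 hab.1
               | exact hx1r hab.1.symm
               | exact hx1r hab.1
               | exact hx1nr hab.1.symm
               | exact hx1nr hab.1)
    have hge := Fintype.card_le_of_injective l hl
    rw [Fintype.card_fin] at hge
    omega
end
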